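/- Let z be an element of I^fpf_infty. The symplectic involution Schubert polynomial S^Sp_z lies in Z[x_1,...,x_n] (i.e., involves no variable x_m with m > n) if and only if z has no fpf-descent greater than n, where a positive integer i is an fpf-descent of z if i+1 != z(i) > z(i+1) != i. -/

import Mathlib

open MvPolynomial

/-! ### Permutations of ℤ, reduced words -/

/-- The simple transposition `s_i = (i, i+1)` of `ℤ`. -/
def sT (i : ℤ) : Equiv.Perm ℤ := Equiv.swap i (i + 1)

/-- The product `s_{i_1} s_{i_2} ⋯ s_{i_l}` of the simple transpositions indexed by a word. -/
def wordProd (l : List ℤ) : Equiv.Perm ℤ := (l.map sT).prod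

/-- `S_ℤ`: the subgroup of permutations of `ℤ` generated by the simple transpositions. -/
def SZSet : Set (Equiv.Perm ℤ) := {w | ∃ l : List ℤ, wordProd l = w}

/-- `S_∞`: the subgroup generated by `s_i` for `i ≥ 1`. -/
def SinftySet : Set (Equiv.Perm ℤ) :=
  {w | ∃ l : List ℤ, (∀ i ∈ l, 1 ≤ i) ∧ wordProd l = w}

/-- `S_n`: the subgroup generated by `s_i` for `1 ≤ i ≤ n-1`. -/
def SnSet (n : ℕ) : Set (Equiv.Perm ℤ) :=
  {w | ∃ l : List ℤ, (∀ i ∈ l, 1 ≤ i ∧ i < n) ∧ wordProd l = w}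

/-- A reduced word for `w`: a minimal length word whose product is `w`. -/
def IsReducedWord (w : Equiv.Perm ℤ) (l : List ℤ) : Prop :=
  wordProd l = w ∧ ∀ m : List ℤ, wordProd m = w → l.length ≤ m.length

/-- The Coxeter length of `w` (the length of any reduced word for `w`). -/
noncomputable def lenOf (w : Equiv.Perm ℤ) : ℕ :=
  sInf {m | ∃ l : List ℤ, wordProd l = w ∧ l.length = m}

/-- The inversion set `Inv(w) = {(a,b) : a < b, w(a) > w(b)}`. -/
def InvSet (w : Equiv.Perm ℤ) : Set (ℤ × ℤ) := {p | p.1 < p.2 ∧ w p.2 < w p.1}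

/-- The Lehmer code `c_i(w) = #{j : i < j, w(i) > w(j)}`. -/
noncomputable def codeOf (w : Equiv.Perm ℤ) (i : ℤ) : ℕ := {j : ℤ | i < j ∧ w j < w i}.ncard

/-- The Rothe diagram `D(w) = {(i, w(j)) : i < j, w(i) > w(j)}`. -/
def RotheD (w : Equiv.Perm ℤ) : Set (ℤ × ℤ) :=
  {p | ∃ j : ℤ, p.1 < j ∧ w j < w p.1 ∧ p.2 = w j}

/-! ### Primed letters and primed words -/

/-- A primed letter: `(x, false)` denotes the integer `x`, `(x, true)` denotes `x' = x - 1/2`. -/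
abbrev PLetter := ℤ × Bool

/-- Twice the value of a primed letter (so that comparisons agree with `1' < 1 < 2' < 2 < ⋯`). -/
def pval (p : PLetter) : ℤ := 2 * p.1 - (if p.2 then 1 else 0)

/-- A strictly decreasing primed word. -/
def PDec (l : List PLetter) : Prop := l.Pairwise (fun p q => pval q < pval p)

/-- A strictly decreasing integer word. -/
def ZDec (l : List ℤ) : Prop := l.Pairwise (fun x y => y < x)

/-- Remove the primes from a primed word (the "ceiling"). -/
def unprimeW (l : List PLetter) : List ℤ := l.map Prod.fst

/-- Membership in `R⁺(w)`: a primed word whose unprimed form is a reduced word for `w`. -/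
def IsPrimedReducedWord (w : Equiv.Perm ℤ) (l : List PLetter) : Prop :=
  IsReducedWord w (unprimeW l)

/-- The set `Marked(i)` of marked inversions of a primed word. -/
def markedSet (l : List PLetter) : Set (ℤ × ℤ) :=
  {p | ∃ j : Fin l.length, (l.get j).2 = true ∧
        p.1 = wordProd ((l.drop ((j : ℕ) + 1)).reverse.map Prod.fst) (l.get j).1 ∧
        p.2 = wordProd ((l.drop ((j : ℕ) + 1)).reverse.map Prod.fst) ((l.get j).1 + 1)}

/-! ### Factorizations (as sequences of factors) -/

/-- The concatenation of the first `N` factors of a factorization. -/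
def concatP (a : ℕ → List PLetter) (N : ℕ) : List PLetter := ((List.range N).map a).flatten

/-- The concatenation of the first `N` factors of an unprimed factorization. -/
def concatZ (a : ℕ → List ℤ) (N : ℕ) : List ℤ := ((List.range N).map a).flatten

/-- `RF⁺(w, A)`: decreasing primed reduced factorizations of `w` with marked set `A`
(all but finitely many factors empty). -/
def RFplus (w : Equiv.Perm ℤ) (A : Set (ℤ × ℤ)) : Set (ℕ → List PLetter) :=
  {a | (∀ i, PDec (a i)) ∧ ∃ N : ℕ, (∀ m, N ≤ m → a m = []) ∧
        IsPrimedReducedWord w (concatP a N) ∧ markedSet (concatP a N) = A}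

/-- `RF⁺_n(w, A)`: elements of `RF⁺(w, A)` with all factors beyond the first `n` empty. -/
def RFplusN (n : ℕ) (w : Equiv.Perm ℤ) (A : Set (ℤ × ℤ)) : Set (ℕ → List PLetter) :=
  {a | (∀ i, PDec (a i)) ∧ (∀ m, n ≤ m → a m = []) ∧
        IsPrimedReducedWord w (concatP a n) ∧ markedSet (concatP a n) = A}

/-- `RF_n(w)`: unprimed decreasing reduced factorizations of `w` into at most `n` factors. -/
def RFZn (n : ℕ) (w : Equiv.Perm ℤ) : Set (ℕ → List ℤ) :=
  {a | (∀ i, ZDec (a i)) ∧ (∀ m, n ≤ m → a m = []) ∧ IsReducedWord w (concatZ a n)}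

/-- Removing the primes from each factor of a primed factorization. -/
def unprimeF (a : ℕ → List PLetter) : ℕ → List ℤ := fun m => unprimeW (a m)

/-! ### The pairing procedure and crystal operators (primed version) -/

/-- Find the first letter `b` in the (decreasing) list with `⌈b⌉ < c`, removing it. -/
def findPairP (c : ℤ) : List PLetter → Option PLetter × List PLetter
  | [] => (none, [])
  | b :: rest =>
      if b.1 < c then (some b, rest)
      else
        let r := findPairP c rest
        (r.1, b :: r.2)

/-- Iterate the pairing over the letters of `v` from right to left. -/
def pairFoldP (u : List PLetter) (vrev : List PLetter) :
    List (PLetter × PLetter) × List PLetter :=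
  vrev.foldl (fun st c =>
    match findPairP c.1 st.2 with
    | (none, r) => (st.1, r)
    | (some b, r) => ((b, c) :: st.1, r)) ([], u)

/-- The set `pair(u, v)` of paired letters, as a list of pairs. -/
def pairsP (u v : List PLetter) : List (PLetter × PLetter) := (pairFoldP u v.reverse).1

/-- The unpaired letters of `v` (in decreasing order). -/
def unpairedSnd (u v : List PLetter) : List PLetter :=
  v.filter fun c => decide (c ∉ (pairsP u v).map Prod.snd)

/-- The unpaired letters of `u` (in decreasing order). -/
def unpairedFst (u v : List PLetter) : List PLetter :=
  u.filter fun b => decide (b ∉ (pairsP u v).map Prod.fst)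

theorem exists_add_not_mem (L : List ℤ) (x : ℤ) : ∃ q : ℕ, x + q ∉ L := by
  have h : ∃ q : ℕ, ∀ y ∈ L, y < x + q := by
    induction L with
    | nil => exact ⟨1, by simp⟩
    | cons a t ih =>
      obtain ⟨q, hq⟩ := ih
      refine ⟨q + (a - x).toNat + 1, ?_⟩
      intro y hy
      rcases List.mem_cons.mp hy with rfl | h
      · push_cast; omega
      · have := hq y h; push_cast; omega
  obtain ⟨q, hq⟩ := h
  exact ⟨q, fun hmem => lt_irrefl _ (hq _ hmem)⟩

theorem exists_sub_not_mem (L : List ℤ) (x : ℤ) : ∃ q : ℕ, x - q ∉ L := by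
  have h : ∃ q : ℕ, ∀ y ∈ L, x - q < y := by
    induction L with
    | nil => exact ⟨1, by simp⟩
    | cons a t ih =>
      obtain ⟨q, hq⟩ := ih
      refine ⟨q + (x - a).toNat + 1, ?_⟩
      intro y hy
      rcases List.mem_cons.mp hy with rfl | h
      · push_cast; omega
      · have := hq y h; push_cast; omega
  obtain ⟨q, hq⟩ := h
  exact ⟨q, fun hmem => lt_irrefl _ (hq _ hmem)⟩

/-- The minimal `q ∈ ℕ` with `x + q ∉ L`. -/
def qUp (L : List ℤ) (x : ℤ) : ℕ := Nat.find (exists_add_not_mem L x)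

/-- The minimal `q ∈ ℕ` with `x - q ∉ L`. -/
def qDown (L : List ℤ) (x : ℤ) : ℕ := Nat.find (exists_sub_not_mem L x)

/-- Reverse the prime on a primed letter. -/
def toggleP (p : PLetter) : PLetter := (p.1, !p.2)

/-- Toggle the prime on the occurrence of the letter `p` in a primed word. -/
def toggleIn (l : List PLetter) (p : PLetter) : List PLetter :=
  l.map fun q => if q = p then toggleP q else q

/-- Swap the primes on a pair `(b, c)` with `b` in the first word and `c` in the second:
reverse both primes when exactly one of the two letters is primed. -/
def swapPairIn (uv : List PLetter × List PLetter) (bc : PLetter × PLetter) :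
    List PLetter × List PLetter :=
  if bc.1.2 = bc.2.2 then uv else (toggleIn uv.1 bc.1, toggleIn uv.2 bc.2)

/-- Insert a letter into a decreasing primed word at the correct position. -/
def insertDecP (p : PLetter) : List PLetter → List PLetter
  | [] => [p]
  | q :: t => if pval q < pval p then p :: q :: t else q :: insertDecP p t

/-- The raising crystal operator acting on a consecutive pair of factors (primed version). -/
def eStepP (u v : List PLetter) : Option (List PLetter × List PLetter) :=
  match unpairedSnd u v with
  | [] => none
  | x :: _ =>
    let q : ℕ := qUp (unprimeW u) x.1
    let toSwap := (pairsP u v).filter fun bc => decide (x.1 < bc.2.1 ∧ bc.2.1 ≤ x.1 + q)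
    some (toSwap.foldl swapPairIn (insertDecP (x.1 + q, x.2) u, v.erase x))

/-- The lowering crystal operator acting on a consecutive pair of factors (primed version). -/
def fStepP (u v : List PLetter) : Option (List PLetter × List PLetter) :=
  match (unpairedFst u v).getLast? with
  | none => none
  | some y =>
    let q : ℕ := qDown (unprimeW v) y.1
    let toSwap := (pairsP u v).filter fun bc => decide (y.1 - q ≤ bc.1.1 ∧ bc.1.1 < y.1)
    some (toSwap.foldl swapPairIn (u.erase y, insertDecP (y.1 - q, y.2) v))

/-- Apply a two-factor operator at position `(i, i+1)` of a factorization. -/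
def applyAtP (g : List PLetter → List PLetter → Option (List PLetter × List PLetter))
    (i : ℕ) (a : ℕ → List PLetter) : Option (ℕ → List PLetter) :=
  (g (a i) (a (i + 1))).map fun uv =>
    Function.update (Function.update a i uv.1) (i + 1) uv.2

/-- The crystal operator `e` on primed factorizations acting on factors `i, i+1` (0-indexed). -/
def eP (i : ℕ) (a : ℕ → List PLetter) : Option (ℕ → List PLetter) := applyAtP eStepP i a

/-- The crystal operator `f` on primed factorizations acting on factors `i, i+1` (0-indexed). -/
def fP (i : ℕ) (a : ℕ → List PLetter) : Option (ℕ → List PLetter) := applyAtP fStepP i a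

/-! ### Crystal operators (unprimed version) -/

def findPairZ (c : ℤ) : List ℤ → Option ℤ × List ℤ
  | [] => (none, [])
  | b :: rest =>
      if b < c then (some b, rest)
      else
        let r := findPairZ c rest
        (r.1, b :: r.2)

def pairFoldZ (u : List ℤ) (vrev : List ℤ) : List (ℤ × ℤ) × List ℤ :=
  vrev.foldl (fun st c =>
    match findPairZ c st.2 with
    | (none, r) => (st.1, r)
    | (some b, r) => ((b, c) :: st.1, r)) ([], u)

/-- The set `pair(u, v)` for integer words. -/
def pairsZ (u v : List ℤ) : List (ℤ × ℤ) := (pairFoldZ u v.reverse).1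

def insertDecZ (x : ℤ) : List ℤ → List ℤ
  | [] => [x]
  | q :: t => if q < x then x :: q :: t else q :: insertDecZ x t

/-- The raising crystal operator on a consecutive pair of integer factors. -/
def eStepZ (u v : List ℤ) : Option (List ℤ × List ℤ) :=
  match v.filter (fun c => decide (c ∉ (pairsZ u v).map Prod.snd)) with
  | [] => none
  | x :: _ =>
    let q : ℕ := qUp u x
    some (insertDecZ (x + q) u, v.erase x)

/-- The lowering crystal operator on a consecutive pair of integer factors. -/
def fStepZ (u v : List ℤ) : Option (List ℤ × List ℤ) :=
  match (u.filter (fun b => decide (b ∉ (pairsZ u v).map Prod.fst))).getLast? with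
  | none => none
  | some y =>
    let q : ℕ := qDown v y
    some (u.erase y, insertDecZ (y - q) v)

def applyAtZ (g : List ℤ → List ℤ → Option (List ℤ × List ℤ))
    (i : ℕ) (a : ℕ → List ℤ) : Option (ℕ → List ℤ) :=
  (g (a i) (a (i + 1))).map fun uv =>
    Function.update (Function.update a i uv.1) (i + 1) uv.2

/-- The crystal operator `e` acting on factors `i, i+1` (0-indexed) of an integer factorization,
so that `eZ i` is the paper's `e_{i+1}`. -/
def eZ (i : ℕ) (a : ℕ → List ℤ) : Option (ℕ → List ℤ) := applyAtZ eStepZ i a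

/-- The crystal operator `f` acting on factors `i, i+1` (0-indexed). -/
def fZ (i : ℕ) (a : ℕ → List ℤ) : Option (ℕ → List ℤ) := applyAtZ fStepZ i a

/-! ### Coxeter–Knuth equivalence and tableaux -/

/-- One elementary Coxeter–Knuth move. -/
inductive CKStep : List ℤ → List ℤ → Prop
  | acb (u v : List ℤ) {a b c : ℤ} (h1 : a < b) (h2 : b < c) :
      CKStep (u ++ a :: c :: b :: v) (u ++ c :: a :: b :: v)
  | bca (u v : List ℤ) {a b c : ℤ} (h1 : a < b) (h2 : b < c) :
      CKStep (u ++ b :: c :: a :: v) (u ++ b :: a :: c :: v)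
  | braid (u v : List ℤ) {a b : ℤ} (h : b = a + 1 ∨ b = a - 1) :
      CKStep (u ++ a :: b :: a :: v) (u ++ b :: a :: b :: v)

/-- Coxeter–Knuth equivalence. -/
def CKEquiv : List ℤ → List ℤ → Prop := Relation.EqvGen CKStep

/-- A tableau is recorded as its list of rows; its shape is the list of row lengths. -/
def shapeOf (T : List (List ℤ)) : List ℕ := T.map List.length

/-- The row reading word: rows left to right, starting with the last row. -/
def rowword (T : List (List ℤ)) : List ℤ := T.reverse.flatten

/-- The reverse row reading word. -/
def revrow (T : List (List ℤ)) : List ℤ := (rowword T).reverse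

/-- The entry of `T` in row `i`, position `j` within the row (both 0-indexed). -/
def entryOf (T : List (List ℤ)) (i j : ℕ) : ℤ := (T.getD i []).getD j 0

/-- `T` has partition shape: rows nonempty with weakly decreasing lengths. -/
def IsPartShape (T : List (List ℤ)) : Prop :=
  (∀ r ∈ T, r ≠ []) ∧ ∀ i, i + 1 < T.length → (T.getD (i + 1) []).length ≤ (T.getD i []).length

/-- An increasing tableau of partition shape. -/
def IncrTab (T : List (List ℤ)) : Prop :=
  IsPartShape T ∧ (∀ r ∈ T, r.Pairwise (· < ·)) ∧
  ∀ i j, i + 1 < T.length → j < (T.getD (i + 1) []).length → entryOf T i j < entryOf T (i + 1) j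

/-- A decreasing tableau of partition shape. -/
def DecrTab (T : List (List ℤ)) : Prop :=
  IsPartShape T ∧ (∀ r ∈ T, r.Pairwise (fun x y => y < x)) ∧
  ∀ i j, i + 1 < T.length → j < (T.getD (i + 1) []).length → entryOf T (i + 1) j < entryOf T i j

/-! ### Shifted tableaux -/

/-- Strict partition shape: rows nonempty with strictly decreasing lengths.  Row `i`
(0-indexed) of a shifted tableau occupies columns `i, i+1, …`. -/
def IsStrictShape (T : List (List ℤ)) : Prop :=
  (∀ r ∈ T, r ≠ []) ∧ ∀ i, i + 1 < T.length → (T.getD (i + 1) []).length < (T.getD i []).length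

/-- An increasing shifted tableau: rows and columns strictly increase.  In row-list
coordinates, the entry of row `i+1` in within-row position `j` lies in the same column as the
entry of row `i` in within-row position `j+1`. -/
def ShIncrTab (T : List (List ℤ)) : Prop :=
  IsStrictShape T ∧ (∀ r ∈ T, r.Pairwise (· < ·)) ∧
  ∀ i j, i + 1 < T.length → j < (T.getD (i + 1) []).length →
    entryOf T i (j + 1) < entryOf T (i + 1) j

/-- A decreasing shifted tableau. -/
def ShDecrTab (T : List (List ℤ)) : Prop :=
  IsStrictShape T ∧ (∀ r ∈ T, r.Pairwise (fun x y => y < x)) ∧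
  ∀ i j, i + 1 < T.length → j < (T.getD (i + 1) []).length →
    entryOf T (i + 1) j < entryOf T i (j + 1)

/-! ### Young diagrams of partitions given as lists -/

/-- The Young diagram of a partition given as a list of row lengths (1-indexed positions). -/
def YDiagL (lam : List ℕ) : Set (ℤ × ℤ) :=
  {p | 1 ≤ p.1 ∧ 1 ≤ p.2 ∧ p.2 ≤ (lam.getD (p.1 - 1).toNat 0 : ℤ)}

/-- The tableau `T_λ` with entry `i + j - 1` in each box `(i, j)` of `D_λ` (1-indexed). -/
def Tlam (lam : List ℕ) : List (List ℤ) :=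
  lam.mapIdx fun i k => (List.range k).map fun j => ((i + j + 1 : ℕ) : ℤ)

/-! ### Fixed-point-free involutions -/

def fpfFun (i : ℤ) : ℤ := if Even i then i - 1 else i + 1

theorem fpfFun_involutive : Function.Involutive fpfFun := by
  intro i
  simp only [fpfFun, Int.even_iff]
  split <;> split <;> omega

/-- The fixed-point-free involution `1_fpf : i ↦ i - (-1)^i`. -/
def onefpf : Equiv.Perm ℤ :=
  ⟨fpfFun, fpfFun, fpfFun_involutive, fpfFun_involutive⟩

/-- `I^fpf_ℤ`: the `S_ℤ`-conjugation orbit of `1_fpf`. -/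
def IfpfZ : Set (Equiv.Perm ℤ) := {z | ∃ w ∈ SZSet, z = w⁻¹ * onefpf * w}

/-- `I^fpf_∞`: the `S_∞`-conjugation orbit of `1_fpf`. -/
def IfpfInfty : Set (Equiv.Perm ℤ) := {z | ∃ w ∈ SinftySet, z = w⁻¹ * onefpf * w}

/-- `𝒜^Sp(z)`: minimal-length `w ∈ S_ℤ` with `z = w⁻¹ 1_fpf w`. -/
def ASp (z : Equiv.Perm ℤ) : Set (Equiv.Perm ℤ) :=
  {w | w ∈ SZSet ∧ z = w⁻¹ * onefpf * w ∧
       ∀ v ∈ SZSet, z = v⁻¹ * onefpf * v → lenOf w ≤ lenOf v}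

/-- `R^Sp(z)`: the set of fpf-involution words for `z`. -/
def RSp (z : Equiv.Perm ℤ) : Set (List ℤ) := {l | ∃ w ∈ ASp z, IsReducedWord w l}

/-- The fpf-involution code `c^Sp_i(z)`. -/
noncomputable def cSp (z : Equiv.Perm ℤ) (i : ℤ) : ℕ :=
  {j : ℤ | i < j ∧ z j < min i (z i)}.ncard

/-- `RF^Sp_n(z)`: symplectic reduced factorizations into at most `n` decreasing factors. -/
def RFSp (n : ℕ) (z : Equiv.Perm ℤ) : Set (ℕ → List ℤ) :=
  {a | (∀ i, ZDec (a i)) ∧ (∀ m, n ≤ m → a m = []) ∧ concatZ a n ∈ RSp z}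

/-- `BRF^Sp_n(z)`: the bounded (by the standard flag) symplectic reduced factorizations:
every letter `m` of the factor in (0-indexed) position `i` satisfies `m ≥ i + 1`. -/
def BRFSp (n : ℕ) (z : Equiv.Perm ℤ) : Set (ℕ → List ℤ) :=
  {a | a ∈ RFSp n z ∧ ∀ m, ∀ x ∈ a m, (m : ℤ) + 1 ≤ x}

/-! ### Symplectic Coxeter–Knuth equivalence -/

/-- The extra symplectic relations, affecting the first two letters. -/
inductive SpExtra : List ℤ → List ℤ → Prop
  | down (a : ℤ) (t : List ℤ) : SpExtra (a :: (a - 1) :: t) (a :: (a + 1) :: t)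
  | comm (a b : ℤ) (t : List ℤ) (h : a % 2 = b % 2) : SpExtra (a :: b :: t) (b :: a :: t)

/-- Symplectic Coxeter–Knuth equivalence. -/
def SpCKEquiv : List ℤ → List ℤ → Prop :=
  Relation.EqvGen (fun x y => CKStep x y ∨ SpExtra x y)

/-- `half_<(λ)` for a partition given as a list: positive values among `λ_i - i`. -/
def halfLtL (lam : List ℕ) : List ℕ :=
  ((List.range lam.length).map fun k => ((lam.getD k 0 : ℤ) - (k + 1)).toNat).filter
    fun m => decide (0 < m)

/-- The shifted tableau `T^Sp_λ` of shape `half_<(λ)` with entry `i + j` in box `(i,j) ∈ SD_μ`. -/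
def TSpTab (lam : List ℕ) : List (List ℤ) :=
  (halfLtL lam).mapIdx fun k m => (List.range m).map fun t => ((2 * (k + 1) + t : ℕ) : ℤ)

/-- Symmetric partition (list version): the diagram is invariant under transposition. -/
def SymmPartL (lam : List ℕ) : Prop :=
  ∀ p : ℤ × ℤ, p ∈ YDiagL lam ↔ (p.2, p.1) ∈ YDiagL lam

/-- Skew-symmetric partition (list version). -/
def SkewSymmPartL (lam : List ℕ) : Prop :=
  SymmPartL lam ∧ ∀ i : ℤ, (i, i) ∈ YDiagL lam → (i + 1, i + 1) ∉ YDiagL lam →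
    (¬ ∃ mu : List ℕ, mu.Pairwise (· ≥ ·) ∧ YDiagL mu = YDiagL lam ∪ {(i, i + 1)} ∧
        YDiagL mu ≠ YDiagL lam) ∧
    (¬ ∃ mu : List ℕ, mu.Pairwise (· ≥ ·) ∧ YDiagL mu = YDiagL lam \ {(i, i + 1)} ∧
        YDiagL mu ≠ YDiagL lam)

/-! ### Demazure product, orthogonal involution words -/

/-- One step of the Demazure product: multiply by `s_i` on the left if this increases length. -/
noncomputable def demStep (i : ℤ) (x : Equiv.Perm ℤ) : Equiv.Perm ℤ :=
  if lenOf x < lenOf (sT i * x) then sT i * x else x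

/-- The Demazure product of the letters of a word. -/
noncomputable def demWordProd (l : List ℤ) : Equiv.Perm ℤ := l.foldr demStep 1

/-- `𝒜^O(z)`: minimal-length `w` with `z = w⁻¹ ∘ w` (Demazure product). -/
def AO (z : Equiv.Perm ℤ) : Set (Equiv.Perm ℤ) :=
  {w | (∃ l : List ℤ, IsReducedWord w l ∧ demWordProd (l.reverse ++ l) = z) ∧
       ∀ v : Equiv.Perm ℤ, (∃ l : List ℤ, IsReducedWord v l ∧ demWordProd (l.reverse ++ l) = z) →
         lenOf w ≤ lenOf v}

/-- `Cyc(z) = {(a, b) : a < b = z(a)}`. -/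
def CycSet (z : Equiv.Perm ℤ) : Set (ℤ × ℤ) := {p | p.1 < p.2 ∧ z p.1 = p.2}

/-- `R^O(z)`: the set of primed involution words for `z`. -/
def RO (z : Equiv.Perm ℤ) : Set (List PLetter) :=
  {l | ∃ A ⊆ CycSet z, ∃ w ∈ AO z, IsPrimedReducedWord w l ∧ markedSet l = A}

/-- The involution code `c^O_i(z)`. -/
noncomputable def cO (z : Equiv.Perm ℤ) (i : ℤ) : ℕ :=
  {j : ℤ | i < j ∧ z j ≤ min i (z i)}.ncard

/-- `RF^O_n(z)`: orthogonal (primed) reduced factorizations into at most `n` factors. -/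
def RFO (n : ℕ) (z : Equiv.Perm ℤ) : Set (ℕ → List PLetter) :=
  {a | (∀ i, PDec (a i)) ∧ (∀ m, n ≤ m → a m = []) ∧ concatP a n ∈ RO z}

/-- The unprimed image `uRF^O_n(z)` of `RF^O_n(z)`. -/
def uRFO (n : ℕ) (z : Equiv.Perm ℤ) : Set (ℕ → List ℤ) := unprimeF '' RFO n z

/-! ### Primed and orthogonal Coxeter–Knuth equivalence -/

/-- One elementary primed Coxeter–Knuth move. -/
inductive PCKStep : List PLetter → List PLetter → Prop
  | swapACB (u v : List PLetter) {A B C : PLetter} (h1 : A.1 < B.1) (h2 : B.1 < C.1) :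
      PCKStep (u ++ A :: C :: B :: v) (u ++ C :: A :: B :: v)
  | swapBCA (u v : List PLetter) {A B C : PLetter} (h1 : A.1 < B.1) (h2 : B.1 < C.1) :
      PCKStep (u ++ B :: C :: A :: v) (u ++ B :: A :: C :: v)
  | braid00 (u v : List PLetter) {a b : ℤ} (h : b = a + 1 ∨ b = a - 1) :
      PCKStep (u ++ (a, false) :: (b, false) :: (a, false) :: v)
              (u ++ (b, false) :: (a, false) :: (b, false) :: v)
  | braid11 (u v : List PLetter) {a b : ℤ} (h : b = a + 1 ∨ b = a - 1) :
      PCKStep (u ++ (a, true) :: (b, true) :: (a, true) :: v)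
              (u ++ (b, true) :: (a, true) :: (b, true) :: v)
  | mixA (u v : List PLetter) {a b : ℤ} (h : b = a + 1 ∨ b = a - 1) :
      PCKStep (u ++ (a, true) :: (b, false) :: (a, false) :: v)
              (u ++ (b, false) :: (a, false) :: (b, true) :: v)
  | mixB (u v : List PLetter) {a b : ℤ} (h : b = a + 1 ∨ b = a - 1) :
      PCKStep (u ++ (a, false) :: (b, true) :: (a, false) :: v)
              (u ++ (b, false) :: (a, true) :: (b, false) :: v)
  | mixC (u v : List PLetter) {a b : ℤ} (h : b = a + 1 ∨ b = a - 1) :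
      PCKStep (u ++ (a, true) :: (b, true) :: (a, false) :: v)
              (u ++ (b, false) :: (a, true) :: (b, true) :: v)
  | mixD (u v : List PLetter) {a b : ℤ} (h : b = a + 1 ∨ b = a - 1) :
      PCKStep (u ++ (a, true) :: (b, false) :: (a, true) :: v)
              (u ++ (b, true) :: (a, false) :: (b, true) :: v)

/-- The extra orthogonal relations, affecting the first letters of words. -/
inductive OExtra : List PLetter → List PLetter → Prop
  | prime (a : ℤ) (w : List PLetter) : OExtra ((a, false) :: w) ((a, true) :: w)
  | comm00 (a b : ℤ) (w : List PLetter) :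
      OExtra ((a, false) :: (b, false) :: w) ((b, false) :: (a, false) :: w)
  | comm01 (a b : ℤ) (w : List PLetter) :
      OExtra ((a, false) :: (b, true) :: w) ((b, false) :: (a, true) :: w)
  | comm10 (a b : ℤ) (w : List PLetter) :
      OExtra ((a, true) :: (b, false) :: w) ((b, true) :: (a, false) :: w)
  | comm11 (a b : ℤ) (w : List PLetter) :
      OExtra ((a, true) :: (b, true) :: w) ((b, true) :: (a, true) :: w)

/-- Orthogonal Coxeter–Knuth equivalence. -/
def OCKEquiv : List PLetter → List PLetter → Prop :=
  Relation.EqvGen (fun x y => PCKStep x y ∨ OExtra x y)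

/-- Increasing shifted tableau with primed entries: removing the primes yields an increasing
shifted tableau. -/
def ShIncrTabP (T : List (List PLetter)) : Prop := ShIncrTab (T.map unprimeW)

/-- Decreasing shifted tableau with primed entries. -/
def ShDecrTabP (T : List (List PLetter)) : Prop := ShDecrTab (T.map unprimeW)

/-- No primed entries on the main diagonal (the first entry of each row). -/
def DiagUnprimed (T : List (List PLetter)) : Prop :=
  ∀ r ∈ T, ∀ p : PLetter, r.head? = some p → p.2 = false

/-- The row reading word of a primed shifted tableau. -/
def rowwordP (T : List (List PLetter)) : List PLetter := T.reverse.flatten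

/-- The shape of a primed tableau. -/
def shapeOfP (T : List (List PLetter)) : List ℕ := T.map List.length

/-! ### Iterated partial operators -/

def iterOpt {α : Type*} (g : α → Option α) : ℕ → α → Option α
  | 0, a => some a
  | m + 1, a => (g a).bind (iterOpt g m)

/-! ### Weak compositions as functions `ℤ → ℕ` supported on positive integers -/

/-- A weak composition: nonnegative entries indexed by positive integers, finitely supported. -/
def WeakCompF (α : ℤ → ℕ) : Prop :=
  (∀ i ≤ 0, α i = 0) ∧ ∃ N : ℤ, ∀ i, N ≤ i → α i = 0

/-- A partition: a weakly decreasing weak composition. -/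
def IsPartitionFun (lam : ℤ → ℕ) : Prop :=
  WeakCompF lam ∧ ∀ i : ℤ, 1 ≤ i → lam (i + 1) ≤ lam i

/-- `lam` is the decreasing rearrangement `λ(α)` of `α`:
it is a partition with the same part multiplicities. -/
def IsDecRearr (α lam : ℤ → ℕ) : Prop :=
  IsPartitionFun lam ∧ ∀ k : ℕ, 0 < k →
    {i : ℤ | 1 ≤ i ∧ k ≤ α i}.ncard = {i : ℤ | 1 ≤ i ∧ k ≤ lam i}.ncard

/-- The Young diagram of a partition function (1-indexed positions). -/
def YDiag (lam : ℤ → ℕ) : Set (ℤ × ℤ) :=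
  {p | 1 ≤ p.1 ∧ 1 ≤ p.2 ∧ p.2 ≤ (lam p.1 : ℤ)}

/-- Symmetric partition: diagram invariant under transposition. -/
def SymmPartF (lam : ℤ → ℕ) : Prop :=
  IsPartitionFun lam ∧ ∀ p : ℤ × ℤ, p ∈ YDiag lam ↔ (p.2, p.1) ∈ YDiag lam

/-- Skew-symmetric partition. -/
def SkewSymmPartF (lam : ℤ → ℕ) : Prop :=
  SymmPartF lam ∧ ∀ i : ℤ, (i, i) ∈ YDiag lam → (i + 1, i + 1) ∉ YDiag lam →
    (¬ ∃ mu : ℤ → ℕ, IsPartitionFun mu ∧ YDiag mu = YDiag lam ∪ {(i, i + 1)} ∧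
        YDiag mu ≠ YDiag lam) ∧
    (¬ ∃ mu : ℤ → ℕ, IsPartitionFun mu ∧ YDiag mu = YDiag lam \ {(i, i + 1)} ∧
        YDiag mu ≠ YDiag lam)

/-- The Demazure action of a simple transposition on weak compositions:
sort the entries in positions `i, i+1` into weakly increasing order. -/
def sComp (i : ℤ) (β : ℤ → ℕ) : ℤ → ℕ :=
  if β (i + 1) < β i then
    (fun j => if j = i then β (i + 1) else if j = i + 1 then β i else β j)
  else β

/-- The Demazure action of a word on a weak composition (rightmost letter acts first). -/
def demCompAct (l : List ℤ) (β : ℤ → ℕ) : ℤ → ℕ := l.foldr sComp β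

/-- `u = u(α)`: the minimal-length permutation with `α = u ∘ λ(α)` under the Demazure action. -/
def IsUofAlpha (α lam : ℤ → ℕ) (u : Equiv.Perm ℤ) : Prop :=
  u ∈ SinftySet ∧ (∃ l : List ℤ, IsReducedWord u l ∧ demCompAct l lam = α) ∧
  ∀ v ∈ SinftySet, (∃ l : List ℤ, IsReducedWord v l ∧ demCompAct l lam = α) → lenOf u ≤ lenOf v

/-! ### Isobaric divided differences, Schubert polynomials -/

/-- `g = π_i f`, i.e. `(x_i - x_{i+1}) g = x_i f - x_{i+1} (s_i f)`. -/
def IsPiApply (i : ℤ) (f g : MvPolynomial ℤ ℤ) : Prop :=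
  (X i - X (i + 1)) * g = X i * f - X (i + 1) * MvPolynomial.rename (sT i) f

/-- `g = π_{i_1} π_{i_2} ⋯ π_{i_k} f` for the word `l = [i_1, …, i_k]`. -/
inductive IsPiWord : List ℤ → MvPolynomial ℤ ℤ → MvPolynomial ℤ ℤ → Prop
  | nil (f : MvPolynomial ℤ ℤ) : IsPiWord [] f f
  | cons (i : ℤ) (t : List ℤ) (f h g : MvPolynomial ℤ ℤ) :
      IsPiWord t f h → IsPiApply i h g → IsPiWord (i :: t) f g

/-- The dominant monomial `x^λ = ∏_{k=1}^{M} x_k^{λ_k}`. -/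
noncomputable def xpow (lam : ℤ → ℕ) (M : ℕ) : MvPolynomial ℤ ℤ :=
  ∏ k ∈ Finset.range M, (X ((k : ℤ) + 1) : MvPolynomial ℤ ℤ) ^ lam ((k : ℤ) + 1)

/-- The defining axioms of the family of Schubert polynomials `{𝔖_w}_{w ∈ S_∞}`:
`𝔖_w = x^λ` for `w` dominant of shape `λ`, and
`∂_i 𝔖_w = 𝔖_{w s_i}` whenever `w(i) > w(i+1)` (cleared of denominators). -/
def IsSchubertFamily (Sf : Equiv.Perm ℤ → MvPolynomial ℤ ℤ) : Prop :=
  (∀ w ∈ SinftySet, ∀ lam : ℤ → ℕ, IsPartitionFun lam → RotheD w = YDiag lam →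
     ∀ M : ℕ, (∀ i : ℤ, (M : ℤ) < i → lam i = 0) → Sf w = xpow lam M) ∧
  (∀ w ∈ SinftySet, ∀ i : ℤ, 1 ≤ i → w (i + 1) < w i →
     (X i - X (i + 1)) * Sf (w * sT i) = Sf w - MvPolynomial.rename (sT i) (Sf w))

/-- Substituting `x_m = 0` for all `m > n` in a polynomial. -/
noncomputable def restrictVars (n : ℕ) (g : MvPolynomial ℤ ℤ) : MvPolynomial ℤ ℤ :=
  (MvPolynomial.aeval fun m : ℤ => if m ≤ (n : ℤ) then (X m : MvPolynomial ℤ ℤ) else 0) g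

/-! ### Queer crystal operators `ē_1`, `f̄_1`, `σ_i` on symplectic factorizations -/

/-- Insert a letter directly after the first letter of a list. -/
def insertAfterFirst (c : ℤ) : List ℤ → List ℤ
  | [] => [c]
  | x :: t => x :: c :: t

/-- The operator `ē_1` on symplectic reduced factorizations. -/
def e1barOp (a : ℕ → List ℤ) : Option (ℕ → List ℤ) :=
  match a 1 with
  | [] => none
  | y :: s =>
    if ∀ x ∈ a 0, x < y then
      if Even y then
        some (Function.update (Function.update a 1 s) 0 (y :: a 0))
      else
        some (Function.update (Function.update a 1 s) 0 (insertAfterFirst (y - 2) (a 0)))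
    else none

/-- The operator `f̄_1` on symplectic reduced factorizations. -/
def f1barOp (a : ℕ → List ℤ) : Option (ℕ → List ℤ) :=
  match a 0 with
  | [] => none
  | x :: _ =>
    if ∀ y ∈ a 1, y < x then
      if (x - 1) ∈ a 0 then
        some (Function.update (Function.update a 0 ((a 0).erase (x - 1))) 1 ((x + 1) :: a 1))
      else
        some (Function.update (Function.update a 0 ((a 0).erase x)) 1 (x :: a 1))
    else none

/-- The string-reversing operator `σ` acting on factors `i, i+1` (0-indexed):
apply `f^k` where `k = wt_i - wt_{i+1}` if `k ≥ 0`, and `e^{-k}` otherwise. -/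
def sigZ (i : ℕ) (a : ℕ → List ℤ) : Option (ℕ → List ℤ) :=
  if (a (i + 1)).length ≤ (a i).length then
    iterOpt (fZ i) ((a i).length - (a (i + 1)).length) a
  else
    iterOpt (eZ i) ((a (i + 1)).length - (a i).length) a

/-- The operators `ē_{j+1}` (0-indexed `j`), defined by
`ē_i = σ_{i-1} σ_i ē_{i-1} σ_i σ_{i-1}`. -/
def ebarOp : ℕ → (ℕ → List ℤ) → Option (ℕ → List ℤ)
  | 0 => e1barOp
  | j + 1 => fun a =>
      (sigZ j a).bind fun b => (sigZ (j + 1) b).bind fun c =>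
        (ebarOp j c).bind fun d => (sigZ (j + 1) d).bind (sigZ j)

/-- The operators `f̄_{j+1}` (0-indexed `j`). -/
def fbarOp : ℕ → (ℕ → List ℤ) → Option (ℕ → List ℤ)
  | 0 => f1barOp
  | j + 1 => fun a =>
      (sigZ j a).bind fun b => (sigZ (j + 1) b).bind fun c =>
        (fbarOp j c).bind fun d => (sigZ (j + 1) d).bind (sigZ j)

/-! ### Crystal Demazure operators on symplectic factorizations -/

/-- The crystal Demazure operator `𝔇_i` (paper-indexed `i ∈ [n-1]`) inside the ambient
crystal `RF^Sp_n(z)`:  all `b` with `e_i^m(b) ∈ X` for some `m ∈ ℕ`. -/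
def DOpSp (n : ℕ) (z : Equiv.Perm ℤ) (i : ℤ) (Xs : Set (ℕ → List ℤ)) : Set (ℕ → List ℤ) :=
  {b | b ∈ RFSp n z ∧ ∃ m : ℕ, ∃ b', iterOpt (eZ (i - 1).toNat) m b = some b' ∧ b' ∈ Xs}

/-- `𝔇_{i_1} 𝔇_{i_2} ⋯ 𝔇_{i_k} X` for the word `l = [i_1, …, i_k]`. -/
def DemFoldSp (n : ℕ) (z : Equiv.Perm ℤ) (l : List ℤ) (Xs : Set (ℕ → List ℤ)) :
    Set (ℕ → List ℤ) :=
  l.foldr (fun i Y => DOpSp n z i Y) Xs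
/-! ### Auxiliary development for Statement 13 -/

namespace Stmt13

/-! #### Simple transpositions -/

lemma sT_apply_def (i x : ℤ) : sT i x = if x = i then i + 1 else if x = i + 1 then i else x :=
  Equiv.swap_apply_def i (i+1) x

lemma sT_inv (i : ℤ) : (sT i)⁻¹ = sT i := Equiv.swap_inv i (i+1)

lemma sT_mul_self (i : ℤ) : sT i * sT i = 1 := Equiv.swap_mul_self i (i+1)

lemma sT_left (i : ℤ) : sT i i = i + 1 := Equiv.swap_apply_left _ _

lemma sT_right (i : ℤ) : sT i (i+1) = i := Equiv.swap_apply_right _ _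

lemma sT_other {i x : ℤ} (h1 : x ≠ i) (h2 : x ≠ i + 1) : sT i x = x :=
  Equiv.swap_apply_of_ne_of_ne h1 h2

lemma sT_invol (i x : ℤ) : sT i (sT i x) = x := Equiv.swap_apply_self _ _ _

lemma sT_lt_sT {i a b : ℤ} (hab : a < b) (hne : ¬(a = i ∧ b = i + 1)) : sT i a < sT i b := by
  rw [sT_apply_def, sT_apply_def]
  split_ifs <;> omega

lemma lt_of_sT_lt {i u v : ℤ} (h : sT i u < sT i v) (hne : ¬(u = i + 1 ∧ v = i)) : u < v := by
  rw [sT_apply_def, sT_apply_def] at h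
  split_ifs at h <;> omega

/-! #### Words -/

lemma wordProd_nil : wordProd ([] : List ℤ) = 1 := rfl

lemma wordProd_cons (i : ℤ) (l : List ℤ) : wordProd (i :: l) = sT i * wordProd l := by
  simp [wordProd]

lemma wordProd_append (l m : List ℤ) : wordProd (l ++ m) = wordProd l * wordProd m := by
  simp [wordProd]

lemma wordProd_concat (l : List ℤ) (i : ℤ) : wordProd (l ++ [i]) = wordProd l * sT i := by
  simp [wordProd]

lemma SZ_one : (1 : Equiv.Perm ℤ) ∈ SZSet := ⟨[], rfl⟩

lemma SZ_mul_sT {w : Equiv.Perm ℤ} (hw : w ∈ SZSet) (i : ℤ) : w * sT i ∈ SZSet := by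
  obtain ⟨l, hl⟩ := hw
  exact ⟨l ++ [i], by rw [wordProd_concat, hl]⟩

lemma Sinfty_one : (1 : Equiv.Perm ℤ) ∈ SinftySet := ⟨[], by simp, rfl⟩

lemma Sinfty_mul_sT {w : Equiv.Perm ℤ} (hw : w ∈ SinftySet) {i : ℤ} (hi : 1 ≤ i) :
    w * sT i ∈ SinftySet := by
  obtain ⟨l, hl1, hl2⟩ := hw
  refine ⟨l ++ [i], ?_, by rw [wordProd_concat, hl2]⟩
  intro j hj
  rcases List.mem_append.mp hj with h | h
  · exact hl1 j h
  · simp only [List.mem_singleton] at h; omega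

lemma Sinfty_sub_SZ {w : Equiv.Perm ℤ} (hw : w ∈ SinftySet) : w ∈ SZSet := by
  obtain ⟨l, _, hl⟩ := hw; exact ⟨l, hl⟩

lemma wordProd_apply_fix (l : List ℤ) (x : ℤ) (h : ∀ i ∈ l, x ≠ i ∧ x ≠ i + 1) :
    wordProd l x = x := by
  induction l with
  | nil => rfl
  | cons i t ih =>
      rw [wordProd_cons, Equiv.Perm.mul_apply, ih (fun j hj => h j (List.mem_cons_of_mem _ hj))]
      exact sT_other (h i List.mem_cons_self).1 (h i List.mem_cons_self).2

lemma SZ_bounded {w : Equiv.Perm ℤ} (hw : w ∈ SZSet) :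
    ∃ A B : ℤ, ∀ x : ℤ, (x < A ∨ B < x) → w x = x := by
  obtain ⟨l, hl⟩ := hw
  subst hl
  induction l with
  | nil => exact ⟨0, 0, fun x _ => rfl⟩
  | cons i t ih =>
      obtain ⟨A, B, hAB⟩ := ih
      refine ⟨min A i, max B (i + 1), fun x hx => ?_⟩
      rw [wordProd_cons, Equiv.Perm.mul_apply, hAB x (by omega)]
      exact sT_other (by omega) (by omega)

lemma Sinfty_fix_nonpos {w : Equiv.Perm ℤ} (hw : w ∈ SinftySet) {x : ℤ} (hx : x ≤ 0) :
    w x = x := by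
  obtain ⟨l, hl1, hl2⟩ := hw
  subst hl2
  exact wordProd_apply_fix l x (fun i hi => by have := hl1 i hi; omega)

lemma Sinfty_pos {w : Equiv.Perm ℤ} (hw : w ∈ SinftySet) {x : ℤ} (hx : 1 ≤ x) : 1 ≤ w x := by
  by_contra h
  push_neg at h
  have h1 : w (w x) = w x := Sinfty_fix_nonpos hw (by omega)
  have := w.injective h1
  omega

lemma inv_fix {w : Equiv.Perm ℤ} {x : ℤ} (h : w x = x) : w⁻¹ x = x := by
  conv_lhs => rw [← h]
  exact w.symm_apply_apply x

/-! #### Inversions -/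

lemma mem_InvSet {w : Equiv.Perm ℤ} {a b : ℤ} : (a, b) ∈ InvSet w ↔ a < b ∧ w b < w a :=
  Iff.rfl

lemma InvSet_one : InvSet (1 : Equiv.Perm ℤ) = ∅ := by
  ext ⟨a, b⟩
  simp only [InvSet, Set.mem_setOf_eq, Set.mem_empty_iff_false, iff_false, not_and,
    Equiv.Perm.coe_one, id_eq, not_lt]
  omega

/-- The involution `(a, b) ↦ (sT i a, sT i b)` on pairs. -/
noncomputable def phi (i : ℤ) (p : ℤ × ℤ) : ℤ × ℤ := (sT i p.1, sT i p.2)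

lemma phi_invol (i : ℤ) (p : ℤ × ℤ) : phi i (phi i p) = p := by
  simp [phi, sT_invol]

lemma phi_inj (i : ℤ) : Function.Injective (phi i) :=
  Function.Involutive.injective (phi_invol i)

lemma invset_mul_sT_diff (w : Equiv.Perm ℤ) (i : ℤ) :
    InvSet (w * sT i) \ {(i, i+1)} = phi i '' (InvSet w \ {(i, i+1)}) := by
  ext ⟨a, b⟩
  simp only [Set.mem_diff, Set.mem_image, Set.mem_singleton_iff, Prod.mk.injEq, Prod.ext_iff]
  constructor
  · rintro ⟨⟨hab, hinv⟩, hne⟩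
    simp only [Equiv.Perm.mul_apply] at hinv
    refine ⟨(sT i a, sT i b), ⟨⟨?_, ?_⟩, ?_⟩, by simp [phi, sT_invol]⟩
    · exact sT_lt_sT hab (fun h => hne (by simp [h.1, h.2]))
    · exact hinv
    · rintro ⟨h1, h2⟩
      have ha : a = i + 1 := by have := congrArg (sT i) h1; rwa [sT_invol, sT_left] at this
      have hb : b = i := by have := congrArg (sT i) h2; rwa [sT_invol, sT_right] at this
      omega
  · rintro ⟨⟨p, q⟩, ⟨⟨hpq, hinv⟩, hne⟩, h1, h2⟩
    simp only [phi] at h1 h2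
    subst h1; subst h2
    refine ⟨⟨sT_lt_sT hpq (fun h => hne (by simp [h.1, h.2])), ?_⟩, ?_⟩
    · simpa only [Equiv.Perm.mul_apply, sT_invol] using hinv
    · rintro ⟨h1, h2⟩
      have hp : p = i + 1 := by have := congrArg (sT i) h1; rwa [sT_invol, sT_left] at this
      have hq : q = i := by have := congrArg (sT i) h2; rwa [sT_invol, sT_right] at this
      omega

lemma pt_mem_invset_mul_sT {w : Equiv.Perm ℤ} {i : ℤ} :
    (i, i+1) ∈ InvSet (w * sT i) ↔ w i < w (i + 1) := by
  simp only [mem_InvSet, Equiv.Perm.mul_apply, sT_left, sT_right]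
  constructor
  · rintro ⟨-, h⟩; exact h
  · intro h; exact ⟨by omega, h⟩

lemma invset_mul_sT_finite {w : Equiv.Perm ℤ} (h : (InvSet w).Finite) (i : ℤ) :
    (InvSet (w * sT i)).Finite := by
  have hsub : InvSet (w * sT i) ⊆ phi i '' (InvSet w) ∪ {(i, i+1)} := by
    intro p hp
    by_cases hpt : p = (i, i+1)
    · exact Or.inr (by simp [hpt])
    · have : p ∈ InvSet (w * sT i) \ {(i, i+1)} := ⟨hp, hpt⟩
      rw [invset_mul_sT_diff] at this
      exact Or.inl (Set.image_mono Set.diff_subset this)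
  exact Set.Finite.subset ((h.image _).union (Set.finite_singleton _)) hsub

lemma NI_mul_sT_desc {w : Equiv.Perm ℤ} {i : ℤ} (hfin : (InvSet w).Finite)
    (h : w (i+1) < w i) : (InvSet (w * sT i)).ncard + 1 = (InvSet w).ncard := by
  have hpt : (i, i+1) ∈ InvSet w := ⟨by omega, h⟩
  have hnot : (i, i+1) ∉ InvSet (w * sT i) := by
    rw [pt_mem_invset_mul_sT]; omega
  have heq : InvSet (w * sT i) = phi i '' (InvSet w \ {(i, i+1)}) := by
    rw [← invset_mul_sT_diff]
    exact (Set.diff_singleton_eq_self hnot).symm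
  rw [heq, Set.ncard_image_of_injective _ (phi_inj i)]
  exact Set.ncard_diff_singleton_add_one hpt hfin

lemma NI_mul_sT_asc {w : Equiv.Perm ℤ} {i : ℤ} (hfin : (InvSet w).Finite)
    (h : w i < w (i+1)) : (InvSet (w * sT i)).ncard = (InvSet w).ncard + 1 := by
  have hpt : (i, i+1) ∉ InvSet w := by
    rw [mem_InvSet]; omega
  have hmem : (i, i+1) ∈ InvSet (w * sT i) := pt_mem_invset_mul_sT.mpr h
  have heq : InvSet (w * sT i) = insert (i, i+1) (phi i '' (InvSet w)) := by
    have h1 : InvSet (w * sT i) \ {(i, i+1)} = phi i '' (InvSet w) := by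
      rw [invset_mul_sT_diff, Set.diff_singleton_eq_self hpt]
    ext p
    by_cases hp : p = (i, i+1)
    · simp [hp, hmem]
    · constructor
      · intro hmem'
        exact Set.mem_insert_of_mem _ (h1 ▸ (⟨hmem', hp⟩ : p ∈ InvSet (w * sT i) \ {(i, i+1)}))
      · intro hmem'
        rcases Set.mem_insert_iff.mp hmem' with h' | h'
        · exact absurd h' hp
        · exact (h1 ▸ (h' : p ∈ phi i '' (InvSet w))).1
  rw [heq, Set.ncard_insert_of_notMem ?notmem (hfin.image _),
    Set.ncard_image_of_injective _ (phi_inj i)]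
  case notmem =>
    rintro ⟨⟨p, q⟩, hpq, hval⟩
    simp only [phi, Prod.mk.injEq] at hval
    have hp : p = i + 1 := by
      have := congrArg (sT i) hval.1; rwa [sT_invol, sT_left] at this
    have hq : q = i := by
      have := congrArg (sT i) hval.2; rwa [sT_invol, sT_right] at this
    have := hpq.1
    omega

lemma NI_wordProd (l : List ℤ) :
    (InvSet (wordProd l)).Finite ∧ (InvSet (wordProd l)).ncard ≤ l.length := by
  induction l using List.reverseRecOn with
  | nil => rw [wordProd_nil, InvSet_one]; exact ⟨Set.finite_empty, by simp⟩
  | append_singleton t i ih =>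
      rw [wordProd_concat]
      obtain ⟨hfin, hle⟩ := ih
      refine ⟨invset_mul_sT_finite hfin i, ?_⟩
      set w := wordProd t
      rcases lt_trichotomy (w i) (w (i+1)) with h | h | h
      · rw [NI_mul_sT_asc hfin h]; simpa using hle
      · exact absurd (w.injective h) (by omega)
      · have := NI_mul_sT_desc hfin h
        simp only [List.length_append, List.length_singleton]
        omega

lemma invset_finite_SZ {w : Equiv.Perm ℤ} (hw : w ∈ SZSet) : (InvSet w).Finite := by
  obtain ⟨l, hl⟩ := hw; exact hl ▸ (NI_wordProd l).1

end Stmt13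
namespace Stmt13

/-! #### length theory -/

lemma eq_one_of_no_inversion {w : Equiv.Perm ℤ} (hw : w ∈ SZSet) (h : InvSet w = ∅) :
    w = 1 := by
  obtain ⟨A, B, hAB⟩ := SZ_bounded hw
  have hmono : ∀ a b : ℤ, a < b → w a < w b := by
    intro a b hab
    rcases lt_trichotomy (w a) (w b) with h' | h' | h'
    · exact h'
    · exact absurd (w.injective h') (by omega)
    · have hm : (a, b) ∈ InvSet w := ⟨hab, h'⟩
      rw [h] at hm
      exact hm.elim
  have key : ∀ n : ℕ, ∀ x : ℤ, B + 1 - n ≤ x → w x = x := by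
    intro n
    induction n with
    | zero => intro x hx; exact hAB x (by omega)
    | succ n ih =>
        intro x hx
        by_cases hx2 : B + 1 - n ≤ x
        · exact ih x hx2
        · have hx3 : x = B - n := by omega
          have h1 : w x < x + 1 := by
            have := hmono x (x + 1) (by omega)
            rw [ih (x + 1) (by omega)] at this
            exact this
          rcases lt_trichotomy (w x) x with h2 | h2 | h2
          · -- w x < x : contradiction via surjectivity
            set u := w⁻¹ x with hu
            have hwu : w u = x := w.apply_symm_apply x
            rcases lt_trichotomy u x with h3 | h3 | h3
            · have := hmono u x h3; omega
            · rw [h3] at hwu; omega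
            · have h4 : w u = u := ih u (by omega)
              omega
          · exact h2
          · omega
  ext x
  simp only [Equiv.Perm.coe_one, id_eq]
  exact key (B + 1 - x).toNat x (by omega)

lemma exists_adj_descent {w : Equiv.Perm ℤ} {a b : ℤ} (h : (a, b) ∈ InvSet w) :
    ∃ i, a ≤ i ∧ (i, i+1) ∈ InvSet w := by
  obtain ⟨hab, hinv⟩ := h
  have key : ∀ n : ℕ, ∀ a b : ℤ, (b - a).toNat ≤ n → a < b → w b < w a →
      ∃ i, a ≤ i ∧ (i, i+1) ∈ InvSet w := by
    intro n
    induction n with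
    | zero => intro a b h1 h2 _; omega
    | succ n ih =>
        intro a b h1 h2 h3
        by_cases hb : b = a + 1
        · exact ⟨a, le_refl a, by rw [← hb]; exact ⟨h2, h3⟩⟩
        · rcases lt_trichotomy (w (a+1)) (w a) with h4 | h4 | h4
          · exact ⟨a, le_refl a, by omega, h4⟩
          · exact absurd (w.injective h4) (by omega)
          · obtain ⟨i, hi1, hi2⟩ := ih (a+1) b (by omega) (by omega) (by omega)
            exact ⟨i, by omega, hi2⟩
  exact key (b - a).toNat a b (le_refl _) hab hinv

lemma lenOf_le {w : Equiv.Perm ℤ} (l : List ℤ) (h : wordProd l = w) : lenOf w ≤ l.length :=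
  Nat.sInf_le ⟨l, h, rfl⟩

lemma lenOf_word {w : Equiv.Perm ℤ} (hw : w ∈ SZSet) :
    ∃ l : List ℤ, wordProd l = w ∧ l.length = lenOf w := by
  obtain ⟨l, hl⟩ := hw
  have hne : {m | ∃ l : List ℤ, wordProd l = w ∧ l.length = m}.Nonempty := ⟨l.length, l, hl, rfl⟩
  obtain ⟨l', h1, h2⟩ := Nat.sInf_mem hne
  exact ⟨l', h1, h2⟩

lemma NI_le_lenOf {w : Equiv.Perm ℤ} (hw : w ∈ SZSet) : (InvSet w).ncard ≤ lenOf w := by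
  obtain ⟨l, hl, hlen⟩ := lenOf_word hw
  have := (NI_wordProd l).2
  rw [hl] at this
  omega

lemma lenOf_le_NI {w : Equiv.Perm ℤ} (hw : w ∈ SZSet) : lenOf w ≤ (InvSet w).ncard := by
  have key : ∀ k : ℕ, ∀ w : Equiv.Perm ℤ, w ∈ SZSet → (InvSet w).ncard = k →
      lenOf w ≤ k := by
    intro k
    induction k using Nat.strong_induction_on with
    | _ k ih =>
        intro w hw hk
        rcases Nat.eq_zero_or_pos k with h0 | h0
        · subst h0
          have hempty : InvSet w = ∅ := by
            have hfin := invset_finite_SZ hw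
            rcases Set.eq_empty_or_nonempty (InvSet w) with h | h
            · exact h
            · exact absurd hk (by rw [Set.ncard_eq_zero hfin] at *; exact fun h' => h.ne_empty h')
          have := eq_one_of_no_inversion hw hempty
          subst this
          simpa [wordProd] using lenOf_le [] rfl
        · obtain ⟨⟨a, b⟩, hab⟩ := Set.nonempty_of_ncard_ne_zero (by omega : (InvSet w).ncard ≠ 0)
          obtain ⟨i, -, hi⟩ := exists_adj_descent hab
          have hdesc : w (i+1) < w i := hi.2
          have hfin := invset_finite_SZ hw
          have hstep := NI_mul_sT_desc hfin hdesc
          have hw' : w * sT i ∈ SZSet := SZ_mul_sT hw i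
          have hk' : (InvSet (w * sT i)).ncard = k - 1 := by omega
          have hle := ih (k-1) (by omega) (w * sT i) hw' hk'
          obtain ⟨l, hl, hlen⟩ := lenOf_word hw'
          have hword : wordProd (l ++ [i]) = w := by
            rw [wordProd_concat, hl, mul_assoc, sT_mul_self, mul_one]
          have := lenOf_le (l ++ [i]) hword
          simp only [List.length_append, List.length_singleton] at this
          omega
  exact key (InvSet w).ncard w hw rfl

lemma lenOf_eq_NI {w : Equiv.Perm ℤ} (hw : w ∈ SZSet) : lenOf w = (InvSet w).ncard :=
  le_antisymm (lenOf_le_NI hw) (NI_le_lenOf hw)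

lemma lenOf_one : lenOf (1 : Equiv.Perm ℤ) = 0 :=
  Nat.le_zero.mp (by simpa [wordProd] using lenOf_le [] rfl)

lemma eq_one_of_lenOf_zero {w : Equiv.Perm ℤ} (hw : w ∈ SZSet) (h : lenOf w = 0) : w = 1 := by
  rw [lenOf_eq_NI hw] at h
  refine eq_one_of_no_inversion hw ?_
  have hfin := invset_finite_SZ hw
  rcases Set.eq_empty_or_nonempty (InvSet w) with h' | h'
  · exact h'
  · exact absurd h (by rw [Set.ncard_eq_zero hfin]; exact h'.ne_empty)

lemma lenOf_mul_sT_desc {w : Equiv.Perm ℤ} {i : ℤ} (hw : w ∈ SZSet) (h : w (i+1) < w i) :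
    lenOf (w * sT i) + 1 = lenOf w := by
  rw [lenOf_eq_NI hw, lenOf_eq_NI (SZ_mul_sT hw i)]
  exact NI_mul_sT_desc (invset_finite_SZ hw) h

lemma lenOf_mul_sT_asc {w : Equiv.Perm ℤ} {i : ℤ} (hw : w ∈ SZSet) (h : w i < w (i+1)) :
    lenOf (w * sT i) = lenOf w + 1 := by
  rw [lenOf_eq_NI hw, lenOf_eq_NI (SZ_mul_sT hw i)]
  exact NI_mul_sT_asc (invset_finite_SZ hw) h

lemma exists_pos_descent_Sinfty {w : Equiv.Perm ℤ} (hw : w ∈ SinftySet) (hne : w ≠ 1) :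
    ∃ i : ℤ, 1 ≤ i ∧ w (i+1) < w i := by
  have hSZ := Sinfty_sub_SZ hw
  have hfin := invset_finite_SZ hSZ
  rcases Set.eq_empty_or_nonempty (InvSet w) with h | h
  · exact absurd (eq_one_of_no_inversion hSZ h) hne
  · obtain ⟨⟨a, b⟩, hab⟩ := h
    have hab1 : a < b := hab.1
    have hab2 : w b < w a := hab.2
    have ha : 1 ≤ a := by
      by_contra h'
      push_neg at h'
      have h1 : w a = a := Sinfty_fix_nonpos hw (by omega)
      -- w b < a ≤ 0, so w b is nonpositive, so w (w b) = w b, so w b = b > a, contra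
      have h2 : w (w b) = w b := Sinfty_fix_nonpos hw (by omega)
      have := w.injective h2
      omega
    obtain ⟨i, hi1, hi2⟩ := exists_adj_descent hab
    exact ⟨i, by omega, hi2.2⟩

end Stmt13
namespace Stmt13

/-! #### fpf involutions -/

lemma onefpf_apply (x : ℤ) : onefpf x = if x % 2 = 0 then x - 1 else x + 1 := by
  show (if Even x then x - 1 else x + 1) = _
  by_cases h : Even x
  · rw [if_pos h, if_pos (Int.even_iff.mp h)]
  · rw [if_neg h, if_neg (fun hc => h (Int.even_iff.mpr hc))]

lemma onefpf_invol (x : ℤ) : onefpf (onefpf x) = x := fpfFun_involutive x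

lemma onefpf_mul_self : onefpf * onefpf = 1 := Equiv.ext fun x => onefpf_invol x

lemma onefpf_nofix (x : ℤ) : onefpf x ≠ x := by
  rw [onefpf_apply]; split_ifs <;> omega

/-- Inversions of `onefpf` are exactly its 2-cycles. -/
lemma onefpf_pair {a b : ℤ} (hab : a < b) (h : onefpf b < onefpf a) : onefpf a = b := by
  have ha := onefpf_apply a
  have hb := onefpf_apply b
  rw [ha, hb] at h
  rw [ha]
  split_ifs at h ⊢ <;> omega

/-- The set of fpf-inversions. -/
def ESet (z : Equiv.Perm ℤ) : Set (ℤ × ℤ) :=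
  {p | p.1 < p.2 ∧ z p.2 < z p.1 ∧ z p.1 ≠ p.2}

lemma mem_ESet {z : Equiv.Perm ℤ} {a b : ℤ} :
    (a, b) ∈ ESet z ↔ a < b ∧ z b < z a ∧ z a ≠ b := Iff.rfl

lemma ESet_onefpf : ESet onefpf = ∅ := by
  ext ⟨a, b⟩
  simp only [ESet, Set.mem_setOf_eq, Set.mem_empty_iff_false, iff_false, not_and]
  intro h1 h2
  simp only [ne_eq, not_not]
  exact onefpf_pair h1 h2

lemma IfpfZ_invol {z : Equiv.Perm ℤ} (hz : z ∈ IfpfZ) : ∀ x, z (z x) = x := by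
  obtain ⟨w, -, rfl⟩ := hz
  have key : (w⁻¹ * onefpf * w) * (w⁻¹ * onefpf * w) = 1 := by
    calc (w⁻¹ * onefpf * w) * (w⁻¹ * onefpf * w) = w⁻¹ * (onefpf * onefpf) * w := by group
    _ = 1 := by rw [onefpf_mul_self]; group
  exact fun x => by rw [← Equiv.Perm.mul_apply, key, Equiv.Perm.one_apply]

lemma IfpfZ_nofix {z : Equiv.Perm ℤ} (hz : z ∈ IfpfZ) : ∀ x, z x ≠ x := by
  obtain ⟨w, -, rfl⟩ := hz
  intro x h
  simp only [Equiv.Perm.mul_apply] at h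
  have := congrArg w h
  rw [show ∀ y, w (w⁻¹ y) = y from w.apply_symm_apply] at this
  exact onefpf_nofix (w x) this

lemma IfpfInfty_sub_IfpfZ {z : Equiv.Perm ℤ} (hz : z ∈ IfpfInfty) : z ∈ IfpfZ := by
  obtain ⟨w, hw, h⟩ := hz
  exact ⟨w, Sinfty_sub_SZ hw, h⟩

/-- Any `S_ℤ`-conjugate of `1_fpf` agrees with `1_fpf` far away, with an even aligned cutoff. -/
lemma IfpfZ_window {z : Equiv.Perm ℤ} (hz : z ∈ IfpfZ) :
    ∃ M : ℤ, 0 ≤ M ∧ M % 2 = 0 ∧ ∀ x : ℤ, (x ≤ -M ∨ M < x) → z x = onefpf x := by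
  obtain ⟨w, hw, rfl⟩ := hz
  obtain ⟨A, B, hAB⟩ := SZ_bounded hw
  have habsA := neg_abs_le A
  have habsB := le_abs_self B
  have habsA0 := abs_nonneg A
  have habsB0 := abs_nonneg B
  refine ⟨2 * (|A| + |B| + 2), by omega, by omega, ?_⟩
  intro x hx
  have hx1 : w x = x := hAB x (by omega)
  have hx2 : w (onefpf x) = onefpf x := by
    refine hAB _ ?_
    rw [onefpf_apply]
    split_ifs <;> omega
  simp only [Equiv.Perm.mul_apply, hx1]
  exact inv_fix hx2

lemma IfpfZ_ESet_finite {z : Equiv.Perm ℤ} (hz : z ∈ IfpfZ) : (ESet z).Finite := by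
  obtain ⟨M, hM0, hM2, hMw⟩ := IfpfZ_window hz
  have hinv := IfpfZ_invol hz
  have hsub : ESet z ⊆ (Set.Ioc (-M) M) ×ˢ (Set.Ioc (-M) M) := by
    rintro ⟨a, b⟩ ⟨hab, hzab, hzne⟩
    simp only at hab hzab hzne
    -- first: not (M < a)
    have ha2 : a ≤ M := by
      by_contra h
      push_neg at h
      have hb : M < b := by omega
      have hA := hMw a (by omega)
      have hB := hMw b (by omega)
      rw [hA, hB] at hzab
      rw [hA] at hzne
      exact hzne (onefpf_pair hab hzab)
    -- not (a ≤ -M)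
    have ha1 : -M < a := by
      by_contra h
      push_neg at h
      have hA := hMw a (by omega)
      have hza : z a ≤ -M := by
        rw [hA, onefpf_apply]
        split_ifs <;> omega
      have hzb : z b ≤ -M - 1 := by omega
      have hbz : b = onefpf (z b) := by
        have := hMw (z b) (by omega)
        rw [hinv b] at this
        exact this
      have hb1 : b ≤ -M := by
        rw [hbz, onefpf_apply]
        split_ifs <;> omega
      have hB := hMw b (by omega)
      rw [hA, hB] at hzab
      rw [hA] at hzne
      exact hzne (onefpf_pair hab hzab)
    -- b bounds
    have hb2 : b ≤ M := by
      by_contra h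
      push_neg at h
      have hzb : z b = onefpf b := hMw b (by omega)
      have hzb2 : M ≤ z b := by
        rw [hzb, onefpf_apply]; split_ifs <;> omega
      have hza : M < z a := by omega
      have haz : a = onefpf (z a) := by
        have := hMw (z a) (by omega)
        rw [hinv a] at this
        exact this
      rw [onefpf_apply] at haz
      split_ifs at haz <;> omega
    exact ⟨⟨ha1, ha2⟩, ⟨by omega, hb2⟩⟩
  exact Set.Finite.subset ((Set.finite_Ioc _ _).prod (Set.finite_Ioc _ _)) hsub

/-! #### positivity for `IfpfInfty` -/

lemma IfpfInfty_nonpos {z : Equiv.Perm ℤ} (hz : z ∈ IfpfInfty) {x : ℤ} (hx : x ≤ 0) :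
    z x = onefpf x := by
  obtain ⟨w, hw, rfl⟩ := hz
  have h1 : w x = x := Sinfty_fix_nonpos hw hx
  have h2 : w (onefpf x) = onefpf x := by
    refine Sinfty_fix_nonpos hw ?_
    rw [onefpf_apply]; split_ifs <;> omega
  simp only [Equiv.Perm.mul_apply, h1]
  exact inv_fix h2

lemma IfpfInfty_pos {z : Equiv.Perm ℤ} (hz : z ∈ IfpfInfty) {x : ℤ} (hx : 1 ≤ x) :
    1 ≤ z x := by
  obtain ⟨w, hw, rfl⟩ := hz
  simp only [Equiv.Perm.mul_apply]
  have h1 : 1 ≤ w x := Sinfty_pos hw hx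
  have h2 : 1 ≤ onefpf (w x) := by rw [onefpf_apply]; split_ifs <;> omega
  by_contra h
  push_neg at h
  have h3 : w (w⁻¹ (onefpf (w x))) = w⁻¹ (onefpf (w x)) := Sinfty_fix_nonpos hw (by omega)
  rw [show ∀ y, w (w⁻¹ y) = y from w.apply_symm_apply] at h3
  omega

lemma ESet_pos {z : Equiv.Perm ℤ} (hz : z ∈ IfpfInfty) {a b : ℤ} (h : (a, b) ∈ ESet z) :
    1 ≤ a := by
  obtain ⟨hab, hzab, hzne⟩ := h
  simp only at hab hzab hzne
  by_contra h'
  push_neg at h'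
  have hA : z a = onefpf a := IfpfInfty_nonpos hz (show a ≤ (0:ℤ) by omega)
  have hza : z a ≤ 0 := by
    rw [hA, onefpf_apply]
    split_ifs <;> omega
  by_cases hb : 1 ≤ b
  · have := IfpfInfty_pos hz hb
    omega
  · push_neg at hb
    have hB : z b = onefpf b := IfpfInfty_nonpos hz (show b ≤ (0:ℤ) by omega)
    rw [hA, hB] at hzab
    rw [hA] at hzne
    exact hzne (onefpf_pair hab hzab)

end Stmt13
namespace Stmt13

/-! #### Conjugation by a simple transposition -/

/-- Conjugation of `z` by `sT i`. -/
noncomputable def conjT (i : ℤ) (z : Equiv.Perm ℤ) : Equiv.Perm ℤ := sT i * z * sT i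

lemma conjT_apply (i : ℤ) (z : Equiv.Perm ℤ) (x : ℤ) : conjT i z x = sT i (z (sT i x)) := rfl

lemma conjT_conjT (i : ℤ) (z : Equiv.Perm ℤ) : conjT i (conjT i z) = z := by
  show sT i * (sT i * z * sT i) * sT i = z
  have h : sT i * (sT i * z * sT i) * sT i = (sT i * sT i) * z * (sT i * sT i) := by group
  rw [h, sT_mul_self, one_mul, mul_one]

lemma conjT_invol {z : Equiv.Perm ℤ} (hz : ∀ x, z (z x) = x) (i : ℤ) :
    ∀ x, conjT i z (conjT i z x) = x := by
  intro x
  rw [conjT_apply, conjT_apply, sT_invol, hz, sT_invol]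

lemma conjT_nofix {z : Equiv.Perm ℤ} (hz : ∀ x, z x ≠ x) (i : ℤ) :
    ∀ x, conjT i z x ≠ x := by
  intro x h
  rw [conjT_apply] at h
  have := congrArg (sT i) h
  rw [sT_invol] at this
  exact hz (sT i x) this

lemma znofix_ne {z : Equiv.Perm ℤ} (hinv : ∀ x, z (z x) = x) {i : ℤ} (hne : z i ≠ i + 1) :
    z (i + 1) ≠ i := by
  intro hc
  have := hinv (i + 1)
  rw [hc] at this
  exact hne this

lemma conjT_of_pair {z : Equiv.Perm ℤ} (hinv : ∀ x, z (z x) = x) {i : ℤ}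
    (h : z i = i + 1) : conjT i z = z := by
  have h2 : z (i+1) = i := by
    have := hinv i; rw [h] at this; exact this
  ext x
  rw [conjT_apply]
  by_cases hx1 : x = i
  · subst hx1; rw [sT_left, h2, h, sT_left]
  · by_cases hx2 : x = i + 1
    · subst hx2; rw [sT_right, h, h2, sT_right]
    · rw [sT_other hx1 hx2]
      have hz1 : z x ≠ i := by
        intro hc
        have hx' : z (z x) = x := hinv x
        rw [hc, h] at hx'
        exact hx2 hx'.symm
      have hz2 : z x ≠ i + 1 := by
        intro hc
        have hx' : z (z x) = x := hinv x
        rw [hc, h2] at hx'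
        exact hx1 hx'.symm
      exact sT_other hz1 hz2

/-- The key step: conjugating at an fpf-descent removes exactly two fpf-inversions. -/
lemma E_conjT_desc {z : Equiv.Perm ℤ} (hinv : ∀ x, z (z x) = x) (hfix : ∀ x, z x ≠ x)
    {i : ℤ} (hne : z i ≠ i + 1) (hd : z (i+1) < z i) :
    ESet (conjT i z) = phi i '' (ESet z \ {(i, i+1), (z (i+1), z i)}) := by
  have hzi1 : z i ≠ i := hfix i
  have hzi2 : z (i+1) ≠ i + 1 := hfix (i+1)
  have hzi3 : z (i+1) ≠ i := znofix_ne hinv hne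
  have hsz1 : sT i (z i) = z i := sT_other hzi1 hne
  have hsz2 : sT i (z (i+1)) = z (i+1) := sT_other hzi3 hzi2
  apply Set.Subset.antisymm
  · rintro ⟨a, b⟩ ⟨hab, hzab, hzne⟩
    simp only at hab
    simp only [conjT_apply] at hzab hzne
    refine ⟨(sT i a, sT i b), ⟨⟨?_, ?_, ?_⟩, ?_⟩, by simp [phi, sT_invol]⟩
    · -- sT i a < sT i b
      refine sT_lt_sT hab ?_
      rintro ⟨rfl, rfl⟩
      rw [sT_right, sT_left, hsz1, hsz2] at hzab
      omega
    · -- z (sT i b) < z (sT i a)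
      show z (sT i b) < z (sT i a)
      refine lt_of_sT_lt hzab ?_
      rintro ⟨h1, h2⟩
      have ha' : sT i a = z i := by
        have := hinv (sT i a); rw [h2] at this; exact this.symm
      have hb' : sT i b = z (i+1) := by
        have := hinv (sT i b); rw [h1] at this; exact this.symm
      have ha'' : a = z i := by
        have := congrArg (sT i) ha'; rwa [sT_invol, hsz1] at this
      have hb'' : b = z (i+1) := by
        have := congrArg (sT i) hb'; rwa [sT_invol, hsz2] at this
      omega
    · -- z (sT i a) ≠ sT i b
      show z (sT i a) ≠ sT i b
      intro hc
      exact hzne (by rw [hc, sT_invol])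
    · -- not a removed point
      simp only [Set.mem_insert_iff, Set.mem_singleton_iff, Prod.ext_iff]
      rintro (⟨h1, h2⟩ | ⟨h1, h2⟩)
      · have ha' : a = i + 1 := by
          have := congrArg (sT i) h1; rwa [sT_invol, sT_left] at this
        have hb' : b = i := by
          have := congrArg (sT i) h2; rwa [sT_invol, sT_right] at this
        omega
      · have ha' : a = z (i+1) := by
          have := congrArg (sT i) h1; rwa [sT_invol, hsz2] at this
        have hb' : b = z i := by
          have := congrArg (sT i) h2; rwa [sT_invol, hsz1] at this
        subst ha'; subst hb'
        rw [hsz1, hsz2, hinv, hinv, sT_left, sT_right] at hzab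
        omega
  · rintro p' ⟨⟨p, q⟩, ⟨⟨hpq, hzpq, hzpqne⟩, hnotmem⟩, rfl⟩
    simp only at hpq hzpq hzpqne
    have hne1 : ¬(p = i ∧ q = i + 1) := by
      rintro ⟨rfl, rfl⟩
      exact hnotmem (Set.mem_insert _ _)
    have hne2 : ¬(p = z (i+1) ∧ q = z i) := by
      rintro ⟨hp, hq⟩
      refine hnotmem (Set.mem_insert_of_mem _ ?_)
      simp only [Set.mem_singleton_iff, Prod.ext_iff]
      exact ⟨hp, hq⟩
    refine ⟨?_, ?_, ?_⟩
    · exact sT_lt_sT hpq hne1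
    · show conjT i z (sT i q) < conjT i z (sT i p)
      simp only [conjT_apply, sT_invol]
      refine sT_lt_sT hzpq ?_
      rintro ⟨h1, h2⟩
      have hq' : q = z i := by
        have := hinv q; rw [h1] at this; exact this.symm
      have hp' : p = z (i+1) := by
        have := hinv p; rw [h2] at this; exact this.symm
      exact hne2 ⟨hp', hq'⟩
    · show conjT i z (sT i p) ≠ sT i q
      simp only [conjT_apply, sT_invol]
      intro hc
      exact hzpqne ((Equiv.injective (sT i)) hc)

lemma pt1_mem_ESet {z : Equiv.Perm ℤ} {i : ℤ} (hne : z i ≠ i + 1) (hd : z (i+1) < z i) :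
    (i, i+1) ∈ ESet z := ⟨by omega, hd, hne⟩

lemma pt2_mem_ESet {z : Equiv.Perm ℤ} (hinv : ∀ x, z (z x) = x) {i : ℤ}
    (hne : z i ≠ i + 1) (hd : z (i+1) < z i) : (z (i+1), z i) ∈ ESet z := by
  refine ⟨hd, ?_, ?_⟩
  · show z (z i) < z (z (i+1))
    rw [hinv, hinv]; omega
  · show z (z (i+1)) ≠ z i
    rw [hinv]
    intro hc
    exact hne hc.symm

lemma E_ncard_desc {z : Equiv.Perm ℤ} (hinv : ∀ x, z (z x) = x) (hfix : ∀ x, z x ≠ x)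
    {i : ℤ} (hne : z i ≠ i + 1) (hd : z (i+1) < z i) (hfin : (ESet z).Finite) :
    (ESet (conjT i z)).ncard + 2 = (ESet z).ncard := by
  have hzi3 : z (i+1) ≠ i := znofix_ne hinv hne
  have hpt1 := pt1_mem_ESet hne hd
  have hpt2 := pt2_mem_ESet hinv hne hd
  have hptne : ((i, i+1) : ℤ × ℤ) ≠ (z (i+1), z i) := by
    intro hc
    rw [Prod.ext_iff] at hc
    exact hzi3 hc.1.symm
  rw [E_conjT_desc hinv hfix hne hd,
    Set.ncard_image_of_injective _ (phi_inj i)]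
  have h1 : ESet z \ {(i, i+1), (z (i+1), z i)} = (ESet z \ {(i, i+1)}) \ {(z (i+1), z i)} := by
    ext p; simp only [Set.mem_diff, Set.mem_insert_iff, Set.mem_singleton_iff]; tauto
  rw [h1]
  have h2 : (z (i+1), z i) ∈ ESet z \ {(i, i+1)} := by
    refine ⟨hpt2, ?_⟩
    simp only [Set.mem_singleton_iff]
    intro hc
    exact hptne hc.symm
  have h3 := Set.ncard_diff_singleton_add_one h2 hfin.diff
  have h4 := Set.ncard_diff_singleton_add_one hpt1 hfin
  omega

lemma conjT_at_asc {z : Equiv.Perm ℤ} (hinv : ∀ x, z (z x) = x) (hfix : ∀ x, z x ≠ x)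
    {i : ℤ} (hpair : z i ≠ i + 1) :
    conjT i z i = z (i+1) ∧ conjT i z (i+1) = z i := by
  have hzi1 : z i ≠ i := hfix i
  have hzi2 : z (i+1) ≠ i + 1 := hfix (i+1)
  have hzi3 : z (i+1) ≠ i := znofix_ne hinv hpair
  constructor
  · rw [conjT_apply, sT_left, sT_other hzi3 hzi2]
  · rw [conjT_apply, sT_right, sT_other hzi1 hpair]

lemma E_finite_conjT {z : Equiv.Perm ℤ} (hinv : ∀ x, z (z x) = x) (hfix : ∀ x, z x ≠ x)
    (i : ℤ) (hfin : (ESet z).Finite) : (ESet (conjT i z)).Finite := by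
  by_cases hpair : z i = i + 1
  · rw [conjT_of_pair hinv hpair]; exact hfin
  · rcases lt_trichotomy (z (i+1)) (z i) with h | h | h
    · rw [E_conjT_desc hinv hfix hpair h]
      exact hfin.diff.image _
    · exact absurd (z.injective h) (by omega)
    · have hinv' := conjT_invol hinv i
      have hfix' := conjT_nofix hfix i
      obtain ⟨hci, hci1⟩ := conjT_at_asc hinv hfix hpair
      have hd' : conjT i z (i+1) < conjT i z i := by rw [hci, hci1]; exact h
      have hne' : conjT i z i ≠ i + 1 := by rw [hci]; exact hfix (i+1)
      have hkey := E_conjT_desc hinv' hfix' hne' hd'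
      rw [conjT_conjT] at hkey
      have himg : phi i '' ESet z =
          ESet (conjT i z) \ {(i, i+1), (conjT i z (i+1), conjT i z i)} := by
        rw [hkey, ← Set.image_comp]
        have hid : phi i ∘ phi i = id := funext (phi_invol i)
        rw [hid, Set.image_id]
      have hsub : ESet (conjT i z) ⊆ (phi i '' ESet z) ∪
          {(i, i+1), (conjT i z (i+1), conjT i z i)} := by
        rw [himg]
        intro p hp
        by_cases hmem : p ∈ ({(i, i+1), (conjT i z (i+1), conjT i z i)} : Set (ℤ × ℤ))
        · exact Or.inr hmem
        · exact Or.inl ⟨hp, hmem⟩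
      refine Set.Finite.subset ((hfin.image _).union ?_) hsub
      exact (Set.finite_singleton _).insert _

lemma E_ncard_asc {z : Equiv.Perm ℤ} (hinv : ∀ x, z (z x) = x) (hfix : ∀ x, z x ≠ x)
    {i : ℤ} (ha : z i < z (i+1)) (hfin : (ESet z).Finite) :
    (ESet z).ncard + 2 = (ESet (conjT i z)).ncard := by
  have hpair : z i ≠ i + 1 := by
    intro hc
    have := hinv i
    rw [hc] at this
    omega
  have hinv' := conjT_invol hinv i
  have hfix' := conjT_nofix hfix i
  obtain ⟨hci, hci1⟩ := conjT_at_asc hinv hfix hpair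
  have hd' : conjT i z (i+1) < conjT i z i := by rw [hci, hci1]; exact ha
  have hne' : conjT i z i ≠ i + 1 := by rw [hci]; exact hfix (i+1)
  have hfin' : (ESet (conjT i z)).Finite := E_finite_conjT hinv hfix i hfin
  have := E_ncard_desc hinv' hfix' hne' hd' hfin'
  rwa [conjT_conjT] at this

end Stmt13
namespace Stmt13

/-! #### The length formula for fpf involutions -/

/-- Conjugation data propagated along a word. -/
lemma E_ncard_conjT_le {y : Equiv.Perm ℤ} (hinv : ∀ x, y (y x) = x) (hfix : ∀ x, y x ≠ x)
    (hfin : (ESet y).Finite) (i : ℤ) :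
    (ESet (conjT i y)).ncard ≤ (ESet y).ncard + 2 := by
  by_cases hpair : y i = i + 1
  · rw [conjT_of_pair hinv hpair]; omega
  · rcases lt_trichotomy (y (i+1)) (y i) with h | h | h
    · have := E_ncard_desc hinv hfix hpair h hfin
      omega
    · exact absurd (y.injective h) (by omega)
    · have := E_ncard_asc hinv hfix h hfin
      omega

lemma lower_aux : ∀ l : List ℤ, ∀ y : Equiv.Perm ℤ, (∀ x, y (y x) = x) → (∀ x, y x ≠ x) →
    (ESet y).Finite →
    (ESet ((wordProd l)⁻¹ * y * wordProd l)).ncard ≤ (ESet y).ncard + 2 * l.length := by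
  intro l
  induction l with
  | nil =>
      intro y _ _ _
      simp [wordProd_nil]
  | cons i t ih =>
      intro y hinv hfix hfin
      have hrw : (wordProd (i :: t))⁻¹ * y * wordProd (i :: t) =
          (wordProd t)⁻¹ * conjT i y * wordProd t := by
        rw [wordProd_cons, conjT]
        rw [mul_inv_rev, sT_inv]
        group
      rw [hrw]
      have h1 := ih (conjT i y) (conjT_invol hinv i) (conjT_nofix hfix i)
        (E_finite_conjT hinv hfix i hfin)
      have h2 := E_ncard_conjT_le hinv hfix hfin i
      simp only [List.length_cons]
      omega

/-- Lower bound: any `S_ℤ`-conjugator `v` of `z` has `|E(z)| ≤ 2 ℓ(v)`. -/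
lemma E_le_two_lenOf {z v : Equiv.Perm ℤ} (hv : v ∈ SZSet)
    (hconj : z = v⁻¹ * onefpf * v) : (ESet z).ncard ≤ 2 * lenOf v := by
  obtain ⟨l, hl, hlen⟩ := lenOf_word hv
  have := lower_aux l onefpf onefpf_invol onefpf_nofix (by rw [ESet_onefpf]; exact Set.finite_empty)
  rw [hl, ← hconj, ESet_onefpf] at this
  simpa [hlen] using this

/-- `IfpfInfty` is closed under conjugation by `sT i`, `1 ≤ i`. -/
lemma IfpfInfty_conjT {z : Equiv.Perm ℤ} (hz : z ∈ IfpfInfty) {i : ℤ} (hi : 1 ≤ i) :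
    conjT i z ∈ IfpfInfty := by
  obtain ⟨w, hw, rfl⟩ := hz
  refine ⟨w * sT i, Sinfty_mul_sT hw hi, ?_⟩
  rw [conjT, mul_inv_rev, sT_inv]
  group

/-- If `E(z) = ∅` for `z ∈ IfpfInfty` then `z = 1fpf`. -/
lemma eq_onefpf_of_E_empty {z : Equiv.Perm ℤ} (hz : z ∈ IfpfInfty) (h : ESet z = ∅) :
    z = onefpf := by
  have hinv := IfpfZ_invol (IfpfInfty_sub_IfpfZ hz)
  have hfix := IfpfZ_nofix (IfpfInfty_sub_IfpfZ hz)
  have hnotE : ∀ a b : ℤ, a < b → z b < z a → z a = b := by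
    intro a b h1 h2
    by_contra h3
    have : (a, b) ∈ ESet z := ⟨h1, h2, h3⟩
    rw [h] at this
    exact this
  -- step 1: every value is adjacent
  have haux : ∀ a : ℤ, a < z a → z a = a + 1 := by
    intro a hlt
    by_contra hc
    have hb2 : a + 2 ≤ z a := by
      have := hfix a
      omega
    set c := a + 1 with hcdef
    rcases lt_trichotomy (z c) c with h1 | h1 | h1
    · -- z c < c, and z c ≠ a, so z c < a : then (a, c) is an fpf-inversion
      have hzc : z c ≠ a := by
        intro hcc
        have := hinv c
        rw [hcc] at this
        omega
      have h2 : z c < z a := by omega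
      have := hnotE a c (by omega) h2
      omega
    · exact absurd h1 (hfix c)
    · -- z c > c : then (c, z a) or (c, b): use (c, b) where b = z a
      have hzcb : z c ≠ z a := fun hcc => by have := z.injective hcc; omega
      have h2 : z (z a) < z c := by
        rw [hinv]
        omega
      have h3 : c < z a := by omega
      have := hnotE c (z a) h3 h2
      exact hzcb this
  have hadj : ∀ a : ℤ, z a = a + 1 ∨ z a = a - 1 := by
    intro a
    rcases lt_trichotomy a (z a) with h1 | h1 | h1
    · exact Or.inl (haux a h1)
    · exact absurd h1.symm (hfix a)
    · right
      have := haux (z a) (by rw [hinv]; omega)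
      rw [hinv] at this
      omega
  -- step 2: agree with onefpf
  have hbase : ∀ x : ℤ, x ≤ 0 → z x = onefpf x := fun x hx => IfpfInfty_nonpos hz hx
  have hstepone : ∀ x : ℤ, 1 ≤ x → z x = onefpf x → z (x + 1) = onefpf (x + 1) := by
    intro x hx1 hzx
    rcases hadj (x + 1) with h1 | h1
    · have hodd : ¬ (x + 1) % 2 = 0 := by
        intro hp
        rw [onefpf_apply, if_neg (by omega : ¬ x % 2 = 0)] at hzx
        have hzx' : z x = x + 1 := by omega
        have := hinv x
        rw [hzx'] at this
        omega
      rw [h1, onefpf_apply, if_neg hodd]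
    · have h1' : z (x + 1) = x := by omega
      have heven : (x + 1) % 2 = 0 := by
        by_contra hp
        have hzx1 : z x = x + 1 := by
          have := hinv (x + 1)
          rw [h1'] at this
          exact this
        rw [onefpf_apply, if_pos (by omega : x % 2 = 0)] at hzx
        omega
      rw [h1', onefpf_apply, if_pos heven]
      omega
  have hstep : ∀ x : ℤ, 1 ≤ x → z x = onefpf x := by
    have H : ∀ n : ℕ, z (1 + (n : ℤ)) = onefpf (1 + (n : ℤ)) := by
      intro n
      induction n with
      | zero =>
          have hone : z 1 = onefpf 1 := by
            rcases hadj 1 with h1 | h1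
            · rw [h1, onefpf_apply]
              norm_num
            · exfalso
              have h1' : z (1:ℤ) = 0 := by omega
              have hz0 : z (0:ℤ) = onefpf 0 := hbase 0 le_rfl
              rw [onefpf_apply] at hz0
              norm_num at hz0
              have := hinv (1:ℤ)
              rw [h1'] at this
              omega
          simpa using hone
      | succ n ih =>
          have hcast : (1 : ℤ) + ((n + 1 : ℕ) : ℤ) = (1 + (n : ℤ)) + 1 := by push_cast; ring
          rw [hcast]
          exact hstepone _ (by omega) ih
    intro x hx
    have hx' : x = 1 + ((x - 1).toNat : ℤ) := by omega
    rw [hx']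
    exact H _
  ext x
  rcases le_or_gt x 0 with hx | hx
  · exact hbase x hx
  · exact hstep x hx

/-- If `E(z)` is nonempty, it contains an adjacent descent. -/
lemma E_descent_exists {z : Equiv.Perm ℤ} (hinv : ∀ x, z (z x) = x) {a b : ℤ}
    (hmem : (a, b) ∈ ESet z) : ∃ i : ℤ, (i, i+1) ∈ ESet z := by
  have key : ∀ n : ℕ, ∀ a b : ℤ, (b - a).toNat ≤ n → (a, b) ∈ ESet z →
      ∃ i : ℤ, (i, i+1) ∈ ESet z := by
    intro n
    induction n with
    | zero =>
        intro a b h1 h2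
        have := h2.1
        simp only at this
        omega
    | succ n ih =>
        intro a b h1 hmem
        obtain ⟨hab, hzab, hzne⟩ := hmem
        simp only at hab hzab hzne
        by_cases hb : b = a + 1
        · exact ⟨a, by rw [← hb]; exact ⟨hab, hzab, hzne⟩⟩
        · have hb2 : a + 2 ≤ b := by omega
          rcases lt_trichotomy (z (a+1)) (z a) with h2 | h2 | h2
          · by_cases h3 : z a = a + 1
            · -- z a = a + 1, z (a+1) = a
              have hzc : z (a+1) = a := by
                have := hinv a
                rw [h3] at this
                exact this
              have hzb : z b ≠ a := by
                intro hcc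
                rw [← hzc] at hcc
                have := z.injective hcc
                omega
              refine ih (a+1) b (show (b - (a+1)).toNat ≤ n by omega)
                ⟨show a + 1 < b by omega, show z b < z (a+1) by omega,
                 show z (a+1) ≠ b by omega⟩
            · exact ⟨a, ⟨show a < a + 1 by omega, h2, h3⟩⟩
          · exact absurd (z.injective h2) (by omega)
          · by_cases h3 : z (a+1) = b
            · -- crossing case: recurse on (a+1, z a)
              have hzb : z b = a + 1 := by
                have := hinv (a+1)
                rw [h3] at this
                exact this
              have h4 : a + 1 < z a := by omega
              have h5 : z a < b := by omega
              have h6 : z (z a) = a := hinv a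
              refine ih (a+1) (z a) (show (z a - (a+1)).toNat ≤ n by omega)
                ⟨h4, show z (z a) < z (a+1) by omega, show z (a+1) ≠ z a by omega⟩
            · refine ih (a+1) b (show (b - (a+1)).toNat ≤ n by omega)
                ⟨show a + 1 < b by omega, show z b < z (a+1) by omega, h3⟩
  exact key (b - a).toNat a b le_rfl hmem

/-- Upper bound: construction of a minimal conjugator in `S_∞`. -/
lemma upper : ∀ k : ℕ, ∀ z : Equiv.Perm ℤ, z ∈ IfpfInfty → (ESet z).ncard = k →
    ∃ v ∈ SinftySet, z = v⁻¹ * onefpf * v ∧ 2 * lenOf v = (ESet z).ncard := by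
  intro k
  induction k using Nat.strong_induction_on with
  | _ k ih =>
      intro z hz hk
      have hinv := IfpfZ_invol (IfpfInfty_sub_IfpfZ hz)
      have hfix := IfpfZ_nofix (IfpfInfty_sub_IfpfZ hz)
      have hfin := IfpfZ_ESet_finite (IfpfInfty_sub_IfpfZ hz)
      rcases Set.eq_empty_or_nonempty (ESet z) with hE | hE
      · refine ⟨1, Sinfty_one, ?_, ?_⟩
        · rw [eq_onefpf_of_E_empty hz hE]
          group
        · rw [lenOf_one, hE]
          simp
      · obtain ⟨⟨a, b⟩, hab⟩ := hE
        obtain ⟨i, hi⟩ := E_descent_exists hinv hab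
        have hipos : 1 ≤ i := ESet_pos hz hi
        have hne : z i ≠ i + 1 := hi.2.2
        have hd : z (i+1) < z i := hi.2.1
        have hz' : conjT i z ∈ IfpfInfty := IfpfInfty_conjT hz hipos
        have hcard : (ESet (conjT i z)).ncard + 2 = (ESet z).ncard :=
          E_ncard_desc hinv hfix hne hd hfin
        have hklt : (ESet (conjT i z)).ncard < k := by omega
        obtain ⟨v', hv'S, hv'conj, hv'len⟩ := ih _ hklt (conjT i z) hz' rfl
        refine ⟨v' * sT i, Sinfty_mul_sT hv'S hipos, ?_, ?_⟩
        · -- z = (v' * sT i)⁻¹ * onefpf * (v' * sT i)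
          have h1 : (v' * sT i)⁻¹ * onefpf * (v' * sT i) = conjT i (v'⁻¹ * onefpf * v') := by
            rw [conjT, mul_inv_rev, sT_inv]
            group
          rw [h1, ← hv'conj, conjT_conjT]
        · have hle : lenOf (v' * sT i) ≤ lenOf v' + 1 := by
            obtain ⟨l, hl, hlen⟩ := lenOf_word (Sinfty_sub_SZ hv'S)
            have : wordProd (l ++ [i]) = v' * sT i := by rw [wordProd_concat, hl]
            have := lenOf_le _ this
            simp only [List.length_append, List.length_singleton] at this
            omega
          have hge : (ESet z).ncard ≤ 2 * lenOf (v' * sT i) := by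
            refine E_le_two_lenOf (SZ_mul_sT (Sinfty_sub_SZ hv'S) i) ?_
            have h1 : (v' * sT i)⁻¹ * onefpf * (v' * sT i) = conjT i (v'⁻¹ * onefpf * v') := by
              rw [conjT, mul_inv_rev, sT_inv]
              group
            rw [h1, ← hv'conj, conjT_conjT]
          omega

end Stmt13
namespace Stmt13

/-! #### Atoms -/

lemma mem_ASp {z w : Equiv.Perm ℤ} :
    w ∈ ASp z ↔ w ∈ SZSet ∧ z = w⁻¹ * onefpf * w ∧
      ∀ v ∈ SZSet, z = v⁻¹ * onefpf * v → lenOf w ≤ lenOf v := Iff.rfl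

lemma atom_conj_step (v : Equiv.Perm ℤ) (i : ℤ) :
    (v * sT i)⁻¹ * onefpf * (v * sT i) = conjT i (v⁻¹ * onefpf * v) := by
  rw [conjT, mul_inv_rev, sT_inv]
  group

/-- every atom of `z` has `2 ℓ(w) = |E(z)|`. -/
lemma atom_len {z : Equiv.Perm ℤ} (hz : z ∈ IfpfInfty) {w : Equiv.Perm ℤ} (hw : w ∈ ASp z) :
    2 * lenOf w = (ESet z).ncard := by
  obtain ⟨hwSZ, hwconj, hwmin⟩ := hw
  have hlow := E_le_two_lenOf hwSZ hwconj
  obtain ⟨v, hvS, hvconj, hvlen⟩ := upper (ESet z).ncard z hz rfl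
  have := hwmin v (Sinfty_sub_SZ hvS) hvconj
  omega

lemma ASp_nonempty {z : Equiv.Perm ℤ} (hz : z ∈ IfpfInfty) : ∃ w, w ∈ ASp z := by
  obtain ⟨v, hvS, hvconj, hvlen⟩ := upper (ESet z).ncard z hz rfl
  refine ⟨v, Sinfty_sub_SZ hvS, hvconj, ?_⟩
  intro u huSZ huconj
  have := E_le_two_lenOf huSZ huconj
  omega

/-- If `z i = i + 1` then no atom of `z` has a descent at `i`. -/
lemma atom_asc_of_pair {z : Equiv.Perm ℤ} (hz : z ∈ IfpfInfty) {i : ℤ} (hpair : z i = i + 1)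
    {w : Equiv.Perm ℤ} (hw : w ∈ ASp z) : w i < w (i+1) := by
  obtain ⟨hwSZ, hwconj, hwmin⟩ := hw
  rcases lt_trichotomy (w i) (w (i+1)) with h | h | h
  · exact h
  · exact absurd (w.injective h) (by omega)
  · exfalso
    have hinv := IfpfZ_invol (IfpfInfty_sub_IfpfZ hz)
    have hlen := lenOf_mul_sT_desc hwSZ h
    have hconj : z = (w * sT i)⁻¹ * onefpf * (w * sT i) := by
      rw [atom_conj_step, ← hwconj, conjT_of_pair hinv hpair]
    have := hwmin (w * sT i) (SZ_mul_sT hwSZ i) hconj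
    omega

/-- If `z i < z (i+1)` and they are not partners, no atom of `z` has a descent at `i`. -/
lemma atom_asc_of_asc {z : Equiv.Perm ℤ} (hz : z ∈ IfpfInfty) {i : ℤ}
    (ha : z i < z (i+1)) {w : Equiv.Perm ℤ} (hw : w ∈ ASp z) : w i < w (i+1) := by
  have hinv := IfpfZ_invol (IfpfInfty_sub_IfpfZ hz)
  have hfix := IfpfZ_nofix (IfpfInfty_sub_IfpfZ hz)
  have hfin := IfpfZ_ESet_finite (IfpfInfty_sub_IfpfZ hz)
  obtain ⟨hwSZ, hwconj, hwmin⟩ := hw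
  rcases lt_trichotomy (w i) (w (i+1)) with h | h | h
  · exact h
  · exact absurd (w.injective h) (by omega)
  · exfalso
    have hlen := lenOf_mul_sT_desc hwSZ h
    have hconj : conjT i z = (w * sT i)⁻¹ * onefpf * (w * sT i) := by
      rw [atom_conj_step, ← hwconj]
    have hlow := E_le_two_lenOf (SZ_mul_sT hwSZ i) hconj
    have hcard := E_ncard_asc hinv hfix ha hfin
    have hlen2 : 2 * lenOf w = (ESet z).ncard :=
      atom_len hz ⟨hwSZ, hwconj, hwmin⟩
    omega

/-- At an fpf-descent of `z` there is an atom with a descent. -/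
lemma atom_desc_exists {z : Equiv.Perm ℤ} (hz : z ∈ IfpfInfty) {i : ℤ}
    (hd : (i, i+1) ∈ ESet z) :
    ∃ w ∈ ASp z, w (i+1) < w i := by
  have hinv := IfpfZ_invol (IfpfInfty_sub_IfpfZ hz)
  have hfix := IfpfZ_nofix (IfpfInfty_sub_IfpfZ hz)
  have hfin := IfpfZ_ESet_finite (IfpfInfty_sub_IfpfZ hz)
  have hipos : 1 ≤ i := ESet_pos hz hd
  have hne : z i ≠ i + 1 := hd.2.2
  have hdlt : z (i+1) < z i := hd.2.1
  have hz' : conjT i z ∈ IfpfInfty := IfpfInfty_conjT hz hipos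
  have hcard : (ESet (conjT i z)).ncard + 2 = (ESet z).ncard :=
    E_ncard_desc hinv hfix hne hdlt hfin
  obtain ⟨u, hu⟩ := ASp_nonempty hz'
  have hulen : 2 * lenOf u = (ESet (conjT i z)).ncard := atom_len hz' hu
  obtain ⟨huSZ, huconj, humin⟩ := hu
  have hwconj : z = (u * sT i)⁻¹ * onefpf * (u * sT i) := by
    rw [atom_conj_step, ← huconj, conjT_conjT]
  have hwSZ : u * sT i ∈ SZSet := SZ_mul_sT huSZ i
  have hwlow := E_le_two_lenOf hwSZ hwconj
  have hwup : lenOf (u * sT i) ≤ lenOf u + 1 := by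
    obtain ⟨l, hl, hlen⟩ := lenOf_word huSZ
    have hconcat : wordProd (l ++ [i]) = u * sT i := by rw [wordProd_concat, hl]
    have := lenOf_le _ hconcat
    simp only [List.length_append, List.length_singleton] at this
    omega
  have hwlen : lenOf (u * sT i) = lenOf u + 1 := by omega
  have hasc : u i < u (i+1) := by
    rcases lt_trichotomy (u i) (u (i+1)) with h | h | h
    · exact h
    · exact absurd (u.injective h) (by omega)
    · have := lenOf_mul_sT_desc huSZ h
      omega
  refine ⟨u * sT i, ⟨hwSZ, hwconj, ?_⟩, ?_⟩
  · intro v hvSZ hvconj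
    have := E_le_two_lenOf hvSZ hvconj
    omega
  · show (u * sT i) (i+1) < (u * sT i) i
    simp only [Equiv.Perm.mul_apply, sT_left, sT_right]
    exact hasc

/-- Atoms of elements of `IfpfInfty` lie in `S_∞`. -/
lemma ASp_sub_Sinfty {z : Equiv.Perm ℤ} (hz : z ∈ IfpfInfty) {w : Equiv.Perm ℤ}
    (hw : w ∈ ASp z) : w ∈ SinftySet := by
  have key : ∀ k : ℕ, ∀ z : Equiv.Perm ℤ, z ∈ IfpfInfty → ∀ w : Equiv.Perm ℤ, w ∈ ASp z →
      lenOf w = k → w ∈ SinftySet := by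
    intro k
    induction k using Nat.strong_induction_on with
    | _ k ih =>
        intro z hz w hw hk
        have hinv := IfpfZ_invol (IfpfInfty_sub_IfpfZ hz)
        have hfix := IfpfZ_nofix (IfpfInfty_sub_IfpfZ hz)
        have hfin := IfpfZ_ESet_finite (IfpfInfty_sub_IfpfZ hz)
        obtain ⟨hwSZ, hwconj, hwmin⟩ := hw
        rcases Nat.eq_zero_or_pos k with h0 | h0
        · have : w = 1 := eq_one_of_lenOf_zero hwSZ (by omega)
          rw [this]
          exact Sinfty_one
        · -- w ≠ 1, find a descent
          have hNI : (InvSet w).ncard = k := by rw [← lenOf_eq_NI hwSZ]; exact hk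
          obtain ⟨⟨a, b⟩, hab⟩ := Set.nonempty_of_ncard_ne_zero (by omega : (InvSet w).ncard ≠ 0)
          obtain ⟨i, -, hi⟩ := exists_adj_descent hab
          have hdesc : w (i+1) < w i := hi.2
          -- z must have an fpf-descent at i
          have hEmem : (i, i+1) ∈ ESet z := by
            by_cases hpair : z i = i + 1
            · exact absurd (atom_asc_of_pair hz hpair ⟨hwSZ, hwconj, hwmin⟩) (by omega)
            · rcases lt_trichotomy (z i) (z (i+1)) with h | h | h
              · exact absurd (atom_asc_of_asc hz h ⟨hwSZ, hwconj, hwmin⟩) (by omega)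
              · exact absurd (z.injective h) (by omega)
              · exact ⟨by omega, h, hpair⟩
          have hipos : 1 ≤ i := ESet_pos hz hEmem
          -- v := w * sT i is an atom of conjT i z
          have hvconj : conjT i z = (w * sT i)⁻¹ * onefpf * (w * sT i) := by
            rw [atom_conj_step, ← hwconj]
          have hvSZ : w * sT i ∈ SZSet := SZ_mul_sT hwSZ i
          have hvlen := lenOf_mul_sT_desc hwSZ hdesc
          have hz' : conjT i z ∈ IfpfInfty := IfpfInfty_conjT hz hipos
          have hcard : (ESet (conjT i z)).ncard + 2 = (ESet z).ncard :=
            E_ncard_desc hinv hfix hEmem.2.2 hEmem.2.1 hfin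
          have hzlen : 2 * lenOf w = (ESet z).ncard := atom_len hz ⟨hwSZ, hwconj, hwmin⟩
          have hvmin : ∀ v' ∈ SZSet, conjT i z = v'⁻¹ * onefpf * v' →
              lenOf (w * sT i) ≤ lenOf v' := by
            intro v' hv'SZ hv'conj
            have := E_le_two_lenOf hv'SZ hv'conj
            omega
          have hvS : w * sT i ∈ SinftySet :=
            ih (k-1) (by omega) (conjT i z) hz' (w * sT i) ⟨hvSZ, hvconj, hvmin⟩ (by omega)
          have : w = (w * sT i) * sT i := by
            rw [mul_assoc, sT_mul_self, mul_one]
          rw [this]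
          exact Sinfty_mul_sT hvS hipos
  exact key (lenOf w) z hz w hw rfl

end Stmt13
namespace Stmt13

/-! #### Algebraic lemmas -/

lemma X_sub_ne_zero (i : ℤ) : (X i : MvPolynomial ℤ ℤ) - X (i+1) ≠ 0 := by
  intro h
  have := congrArg (eval (fun j : ℤ => if j = i then (1:ℤ) else 0)) h
  rw [map_sub, eval_X, eval_X, map_zero, if_pos rfl, if_neg (by omega : ¬ i + 1 = i)] at this
  norm_num at this

lemma X_sub_cancel {i : ℤ} {g g' : MvPolynomial ℤ ℤ}
    (h : ((X i : MvPolynomial ℤ ℤ) - X (i+1)) * g = (X i - X (i+1)) * g') : g = g' :=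
  mul_left_cancel₀ (X_sub_ne_zero i) h

lemma rename_sT_invol (i : ℤ) (f : MvPolynomial ℤ ℤ) :
    rename (⇑(sT i)) (rename (⇑(sT i)) f) = f := by
  rw [rename_rename]
  have : ⇑(sT i) ∘ ⇑(sT i) = id := funext (sT_invol i)
  rw [this, rename_id]; rfl

/-- Schubert polynomials are symmetric in `x_i, x_{i+1}` at an ascent. -/
lemma Sf_symm {Sf : Equiv.Perm ℤ → MvPolynomial ℤ ℤ} (hSf : IsSchubertFamily Sf)
    {w : Equiv.Perm ℤ} (hw : w ∈ SinftySet) {i : ℤ} (hi : 1 ≤ i) (ha : w i < w (i+1)) :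
    rename (⇑(sT i)) (Sf w) = Sf w := by
  have hw' : w * sT i ∈ SinftySet := Sinfty_mul_sT hw hi
  have hdesc : (w * sT i) (i+1) < (w * sT i) i := by
    simp only [Equiv.Perm.mul_apply, sT_left, sT_right]
    exact ha
  have h1 := hSf.2 (w * sT i) hw' i hi hdesc
  rw [mul_assoc, sT_mul_self, mul_one] at h1
  have h2 := congrArg (rename (⇑(sT i))) h1
  simp only [map_sub, map_mul, rename_X, sT_left, sT_right, rename_sT_invol] at h2
  -- h1 : (X i - X (i+1)) * Sf w = Sf (w * sT i) - rename (Sf (w * sT i))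
  -- h2 : (X (i+1) - X i) * rename (Sf w) = rename (Sf (w * sT i)) - Sf (w * sT i)
  have h3 : ((X i : MvPolynomial ℤ ℤ) - X (i+1)) * (Sf w - rename (⇑(sT i)) (Sf w)) = 0 := by
    linear_combination h1 + h2
  rcases mul_eq_zero.mp h3 with h | h
  · exact absurd h (X_sub_ne_zero i)
  · have := sub_eq_zero.mp h
    exact this.symm

lemma RotheD_one : RotheD (1 : Equiv.Perm ℤ) = YDiag (fun _ => 0) := by
  ext ⟨a, b⟩
  simp only [RotheD, YDiag, Set.mem_setOf_eq, Equiv.Perm.coe_one, id_eq]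
  constructor
  · rintro ⟨j, h1, h2, h3⟩
    omega
  · rintro ⟨h1, h2, h3⟩
    exfalso
    omega

lemma Sf_one {Sf : Equiv.Perm ℤ → MvPolynomial ℤ ℤ} (hSf : IsSchubertFamily Sf) :
    Sf 1 = 1 := by
  have hpart : IsPartitionFun (fun _ : ℤ => 0) := by
    refine ⟨⟨fun i _ => rfl, ⟨0, fun i _ => rfl⟩⟩, fun i _ => le_refl _⟩
  have := hSf.1 1 Sinfty_one (fun _ => 0) hpart RotheD_one 0 (fun i _ => rfl)
  rw [this, xpow]
  simp

/-- Linear independence machine: a nonempty sum of Schubert polynomials over distinct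
permutations in `S_∞` of a common length is nonzero. -/
lemma sum_Sf_ne_zero {Sf : Equiv.Perm ℤ → MvPolynomial ℤ ℤ} (hSf : IsSchubertFamily Sf) :
    ∀ k : ℕ, ∀ G : Finset (Equiv.Perm ℤ), G.Nonempty → (∀ w ∈ G, w ∈ SinftySet) →
    (∀ w ∈ G, lenOf w = k) → (∑ w ∈ G, Sf w) ≠ 0 := by
  intro k
  induction k with
  | zero =>
      intro G hne hS hlen hsum
      have hG : G = {1} := by
        apply Finset.eq_singleton_iff_nonempty_unique_mem.mpr
        refine ⟨hne, fun w hw => ?_⟩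
        exact eq_one_of_lenOf_zero (Sinfty_sub_SZ (hS w hw)) (hlen w hw)
      rw [hG, Finset.sum_singleton, Sf_one hSf] at hsum
      exact one_ne_zero hsum
  | succ k ih =>
      intro G hne hS hlen hsum
      classical
      obtain ⟨w₀, hw₀⟩ := hne
      have hw₀ne : w₀ ≠ 1 := by
        intro hc
        have := hlen w₀ hw₀
        rw [hc, lenOf_one] at this
        omega
      obtain ⟨i, hipos, hidesc⟩ := exists_pos_descent_Sinfty (hS w₀ hw₀) hw₀ne
      set Gd := G.filter (fun w => w (i+1) < w i) with hGd
      have hsum2 : ∑ w ∈ G, rename (⇑(sT i)) (Sf w) = 0 := by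
        rw [← map_sum, hsum, map_zero]
      have hsum3 : ∑ w ∈ G, (Sf w - rename (⇑(sT i)) (Sf w)) = 0 := by
        rw [Finset.sum_sub_distrib, hsum, hsum2, sub_zero]
      have hsum4 : ∑ w ∈ Gd, (Sf w - rename (⇑(sT i)) (Sf w)) = 0 := by
        rw [← hsum3]
        apply Finset.sum_subset (Finset.filter_subset _ _)
        intro w hw hnotd
        simp only [hGd, Finset.mem_filter, not_and] at hnotd
        have hasc : w i < w (i+1) := by
          rcases lt_trichotomy (w i) (w (i+1)) with h | h | h
          · exact h
          · exact absurd (w.injective h) (by omega)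
          · exact absurd h (hnotd hw)
        rw [Sf_symm hSf (hS w hw) hipos hasc, sub_self]
      have hsum5 : ∑ w ∈ Gd, ((X i : MvPolynomial ℤ ℤ) - X (i+1)) * Sf (w * sT i) = 0 := by
        rw [← hsum4]
        apply Finset.sum_congr rfl
        intro w hw
        have hwG := Finset.mem_filter.mp hw
        exact hSf.2 w (hS w hwG.1) i hipos hwG.2
      rw [← Finset.mul_sum] at hsum5
      have hsum6 : ∑ w ∈ Gd, Sf (w * sT i) = 0 := by
        rcases mul_eq_zero.mp hsum5 with h | h
        · exact absurd h (X_sub_ne_zero i)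
        · exact h
      -- reindex over the image
      have hinj : ∀ x ∈ Gd, ∀ y ∈ Gd, x * sT i = y * sT i → x = y := by
        intro x _ y _ h
        exact mul_right_cancel h
      have hsum7 : ∑ v ∈ Gd.image (· * sT i), Sf v = 0 := by
        rw [Finset.sum_image hinj]
        exact hsum6
      have hw₀d : w₀ ∈ Gd := Finset.mem_filter.mpr ⟨hw₀, hidesc⟩
      refine ih (Gd.image (· * sT i)) ⟨w₀ * sT i, Finset.mem_image_of_mem _ hw₀d⟩ ?_ ?_ hsum7
      · intro v hv
        obtain ⟨w, hw, rfl⟩ := Finset.mem_image.mp hv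
        exact Sinfty_mul_sT (hS w (Finset.mem_filter.mp hw).1) hipos
      · intro v hv
        obtain ⟨w, hw, rfl⟩ := Finset.mem_image.mp hv
        have hwG := Finset.mem_filter.mp hw
        have := lenOf_mul_sT_desc (Sinfty_sub_SZ (hS w hwG.1)) hwG.2
        have := hlen w hwG.1
        omega

end Stmt13
namespace Stmt13

/-! #### Variables of renamed polynomials -/

lemma rename_fix_on (σ : ℤ → ℤ) (s : Set ℤ) (hσ : ∀ j ∈ s, σ j = j) :
    ∀ f ∈ Algebra.adjoin ℤ ((X '' s : Set (MvPolynomial ℤ ℤ))), rename σ f = f := by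
  intro f hf
  induction hf using Algebra.adjoin_induction with
  | mem x hx =>
      obtain ⟨j, hj, rfl⟩ := hx
      rw [rename_X, hσ j hj]
  | algebraMap r => simp [MvPolynomial.algebraMap_eq]
  | add x y hx hy ihx ihy => rw [map_add, ihx, ihy]
  | mul x y hx hy ihx ihy => rw [map_mul, ihx, ihy]

lemma rename_eq_self_of_vars {f : MvPolynomial ℤ ℤ} {σ : ℤ → ℤ}
    (h : ∀ j ∈ f.vars, σ j = j) : rename σ f = f := by
  refine rename_fix_on σ (↑f.vars) (fun j hj => h j (by simpa using hj)) f ?_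
  rw [← supported_eq_adjoin_X]
  exact mem_supported_vars f

lemma vars_mem_succ {f : MvPolynomial ℤ ℤ} {i : ℤ} (hinv : rename (⇑(sT i)) f = f)
    (hm : i ∈ f.vars) : i + 1 ∈ f.vars := by
  have hsub : f.vars ⊆ f.vars.image (⇑(sT i)) := by
    conv_lhs => rw [← hinv]
    exact vars_rename _ f
  have heq : f.vars = f.vars.image (⇑(sT i)) :=
    Finset.eq_of_subset_of_card_le hsub Finset.card_image_le
  rw [heq]
  exact Finset.mem_image.mpr ⟨i, hm, sT_left i⟩

lemma not_mem_vars_of_invariant {f : MvPolynomial ℤ ℤ} {n : ℕ}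
    (hinv : ∀ i : ℤ, (n : ℤ) < i → rename (⇑(sT i)) f = f) :
    ∀ m : ℤ, (n : ℤ) < m → m ∉ f.vars := by
  intro m hm hmem
  have hall : ∀ j : ℕ, m + (j : ℤ) ∈ f.vars := by
    intro j
    induction j with
    | zero => simpa using hmem
    | succ j ih =>
        have h1 : (n : ℤ) < m + (j : ℤ) := by
          have : (0:ℤ) ≤ (j:ℤ) := Int.natCast_nonneg j
          omega
        have h2 := vars_mem_succ (hinv (m + (j : ℤ)) h1) ih
        have hcast : m + ((j + 1 : ℕ) : ℤ) = (m + (j : ℤ)) + 1 := by push_cast; ring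
        rwa [hcast]
  have hne : f.vars.Nonempty := ⟨m, hmem⟩
  have hmM : m ≤ f.vars.max' hne := Finset.le_max' _ _ hmem
  have hle : m + (((f.vars.max' hne - m).toNat + 1 : ℕ) : ℤ) ≤ f.vars.max' hne :=
    Finset.le_max' _ _ (hall _)
  push_cast at hle
  omega

end Stmt13
/-- For `z ∈ I^fpf_∞`, the symplectic involution Schubert polynomial
`𝔖^Sp_z = ∑_{w ∈ 𝒜^Sp(z)} 𝔖_w` lies in `ℤ[x_1, …, x_n]` if and only if `z` has no
fpf-descent greater than `n`. -/
theorem SSp_in_n_variables_iff (n : ℕ) (hn : 0 < n)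
    (Sf : Equiv.Perm ℤ → MvPolynomial ℤ ℤ) (hSf : IsSchubertFamily Sf)
    (z : Equiv.Perm ℤ) (hz : z ∈ IfpfInfty)
    (F : Finset (Equiv.Perm ℤ)) (hF : ↑F = ASp z) :
    (∀ m : ℤ, (n : ℤ) < m → m ∉ (∑ w ∈ F, Sf w).vars) ↔
      (∀ i : ℤ, (n : ℤ) < i → ¬ (z i ≠ i + 1 ∧ z (i + 1) < z i ∧ z (i + 1) ≠ i)) := by
  classical
  have hn1 : (1 : ℤ) ≤ (n : ℤ) := by exact_mod_cast hn
  have hmemF : ∀ w : Equiv.Perm ℤ, w ∈ F ↔ w ∈ ASp z := by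
    intro w
    rw [← Finset.mem_coe, hF]
  have hinvz := Stmt13.IfpfZ_invol (Stmt13.IfpfInfty_sub_IfpfZ hz)
  constructor
  · -- bounded variables → no large fpf-descent
    intro hvars i hi
    rintro ⟨h1, h2, h3⟩
    have hipos : (1 : ℤ) ≤ i := by omega
    have hE : (i, i+1) ∈ Stmt13.ESet z := ⟨by omega, h2, h1⟩
    obtain ⟨w₀, hw₀A, hw₀d⟩ := Stmt13.atom_desc_exists hz hE
    have hren : rename (⇑(sT i)) (∑ w ∈ F, Sf w) = ∑ w ∈ F, Sf w := by
      apply Stmt13.rename_eq_self_of_vars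
      intro j hj
      have hj1 : j ≠ i := fun hc => hvars i hi (hc ▸ hj)
      have hj2 : j ≠ i + 1 := fun hc => hvars (i+1) (by omega) (hc ▸ hj)
      exact Stmt13.sT_other hj1 hj2
    have hsum3 : ∑ w ∈ F, (Sf w - rename (⇑(sT i)) (Sf w)) = 0 := by
      rw [Finset.sum_sub_distrib, ← map_sum, hren, sub_self]
    have hsum4 : ∑ w ∈ F.filter (fun w => w (i+1) < w i),
        (Sf w - rename (⇑(sT i)) (Sf w)) = 0 := by
      rw [← hsum3]
      apply Finset.sum_subset (Finset.filter_subset _ _)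
      intro w hw hnotd
      simp only [Finset.mem_filter, not_and] at hnotd
      have hwA := (hmemF w).mp hw
      have hwS := Stmt13.ASp_sub_Sinfty hz hwA
      have hasc : w i < w (i+1) := by
        rcases lt_trichotomy (w i) (w (i+1)) with h | h | h
        · exact h
        · exact absurd (w.injective h) (by omega)
        · exact absurd h (hnotd hw)
      rw [Stmt13.Sf_symm hSf hwS hipos hasc, sub_self]
    have hsum5 : ∑ w ∈ F.filter (fun w => w (i+1) < w i),
        ((X i : MvPolynomial ℤ ℤ) - X (i+1)) * Sf (w * sT i) = 0 := by
      rw [← hsum4]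
      apply Finset.sum_congr rfl
      intro w hw
      have hwF := Finset.mem_filter.mp hw
      exact hSf.2 w (Stmt13.ASp_sub_Sinfty hz ((hmemF w).mp hwF.1)) i hipos hwF.2
    rw [← Finset.mul_sum] at hsum5
    have hsum6 : ∑ w ∈ F.filter (fun w => w (i+1) < w i), Sf (w * sT i) = 0 := by
      rcases mul_eq_zero.mp hsum5 with h | h
      · exact absurd h (Stmt13.X_sub_ne_zero i)
      · exact h
    have hinj : ∀ x ∈ F.filter (fun w => w (i+1) < w i),
        ∀ y ∈ F.filter (fun w => w (i+1) < w i), x * sT i = y * sT i → x = y :=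
      fun x _ y _ h => mul_right_cancel h
    have hsum7 : ∑ v ∈ (F.filter (fun w => w (i+1) < w i)).image (· * sT i), Sf v = 0 := by
      rw [Finset.sum_image hinj]
      exact hsum6
    have hw₀F : w₀ ∈ F.filter (fun w => w (i+1) < w i) :=
      Finset.mem_filter.mpr ⟨(hmemF w₀).mpr hw₀A, hw₀d⟩
    refine Stmt13.sum_Sf_ne_zero hSf (lenOf w₀ - 1)
      ((F.filter (fun w => w (i+1) < w i)).image (· * sT i))
      ⟨w₀ * sT i, Finset.mem_image_of_mem _ hw₀F⟩ ?_ ?_ hsum7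
    · intro v hv
      obtain ⟨w, hw, rfl⟩ := Finset.mem_image.mp hv
      exact Stmt13.Sinfty_mul_sT
        (Stmt13.ASp_sub_Sinfty hz ((hmemF w).mp (Finset.mem_filter.mp hw).1)) hipos
    · intro v hv
      obtain ⟨w, hw, rfl⟩ := Finset.mem_image.mp hv
      have hwF := Finset.mem_filter.mp hw
      have hwA := (hmemF w).mp hwF.1
      have hd1 := Stmt13.lenOf_mul_sT_desc
        (Stmt13.Sinfty_sub_SZ (Stmt13.ASp_sub_Sinfty hz hwA)) hwF.2
      have hd2 := Stmt13.atom_len hz hwA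
      have hd3 := Stmt13.atom_len hz hw₀A
      omega
  · -- no large fpf-descent → bounded variables
    intro hnd m hm
    have hren : ∀ i : ℤ, (n : ℤ) < i → rename (⇑(sT i)) (∑ w ∈ F, Sf w) = ∑ w ∈ F, Sf w := by
      intro i hi
      rw [map_sum]
      apply Finset.sum_congr rfl
      intro w hw
      have hwA := (hmemF w).mp hw
      have hwS := Stmt13.ASp_sub_Sinfty hz hwA
      have hasc : w i < w (i+1) := by
        by_cases hpair : z i = i + 1
        · exact Stmt13.atom_asc_of_pair hz hpair hwA
        · rcases lt_trichotomy (z i) (z (i+1)) with h | h | h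
          · exact Stmt13.atom_asc_of_asc hz h hwA
          · exact absurd (z.injective h) (by omega)
          · exact absurd ⟨hpair, h, Stmt13.znofix_ne hinvz hpair⟩ (hnd i hi)
      exact Stmt13.Sf_symm hSf hwS (by omega) hasc
    exact Stmt13.not_mem_vars_of_invariant hren m hm
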